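/- arXiv:2311.04790 — 3 statements merged into one kernel-verified Lean document; each statement's English description precedes it below -/
import Mathlib

section
/- Let (Ω, 𝓕, P) be a complete probability space, let H be a separable real Hilbert space, and let (A_ω)_{ω∈Ω} be a family of maximally monotone operators from H to 2^H such that for every 𝗑 ∈ H the map ω ↦ J_{A_ω} 𝗑 is measurable and ∫_Ω ‖J_{A_ω} 0‖² P(dω) < +∞. Then the resolvent expectation coincides with the integral resolvent mixture and comixture taken with L_ω = Id_H for all ω: PE(A_ω)_{ω∈Ω} = rmi(Id_H, A_ω)_{ω∈Ω} = rcm(Id_H, A_ω)_{ω∈Ω}. -/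
open MeasureTheory
open scoped ENNReal NNReal

/-- A set-valued operator `A : H → Set H` (identified with its graph) is monotone if
`⟪x − y, u − v⟫ ≥ 0` whenever `u ∈ A x` and `v ∈ A y`. -/
def IsMonotoneOp {H : Type*} [NormedAddCommGroup H] [InnerProductSpace ℝ H]
    (A : H → Set H) : Prop :=
  ∀ ⦃x u y v : H⦄, u ∈ A x → v ∈ A y → (0 : ℝ) ≤ inner ℝ (x - y) (u - v)

/-- `A` is maximally monotone: it is monotone and its graph is not properly contained in the
graph of any monotone operator. -/
def IsMaxMonotone {H : Type*} [NormedAddCommGroup H] [InnerProductSpace ℝ H]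
    (A : H → Set H) : Prop :=
  IsMonotoneOp A ∧ ∀ B : H → Set H, IsMonotoneOp B → (∀ x, A x ⊆ B x) → ∀ x, B x ⊆ A x

/-- The inverse operator `A⁻¹`, whose graph is `{(u, x) : (x, u) ∈ gra A}`. -/
def graphInv {H : Type*} (A : H → Set H) : H → Set H := fun u => {x | u ∈ A x}

/-- `J` is the resolvent `(Id + A)⁻¹` of `A` (as a single-valued, everywhere-defined map):
`J x = y ↔ x − y ∈ A y`. -/
def IsResolventOf {H : Type*} [AddCommGroup H] (A : H → Set H) (J : H → H) : Prop :=
  ∀ x y, J x = y ↔ x - y ∈ A y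

/-- For a single-valued map `R : X → X`, `rmiOp R = R⁻¹ − Id` as a set-valued operator:
`u ∈ (R⁻¹ − Id)(x) ↔ R (x + u) = x`. -/
def rmiOp {X : Type*} [AddCommGroup X] (R : X → X) : X → Set X :=
  fun x => {u | R (x + u) = x}

/-- Proposition 3.9: on a complete probability space, the resolvent
expectation `PE(A_ω) = (x ↦ ∫ J_{A_ω} x dP)⁻¹ − Id` coincides with the integral resolvent
mixture `rmi(Id, A_ω)` and the comixture `rcm(Id, A_ω)`. -/
theorem stmt_10
    {Ω : Type*} [MeasurableSpace Ω] {P : Measure Ω} [IsProbabilityMeasure P] [P.IsComplete]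
    {H : Type*} [NormedAddCommGroup H] [InnerProductSpace ℝ H] [CompleteSpace H]
    [SecondCountableTopology H] [MeasurableSpace H] [BorelSpace H]
    (A : Ω → H → Set H) (JA JAinv : Ω → H → H)
    (hAmax : ∀ ω, IsMaxMonotone (A ω))
    (hJA : ∀ ω, IsResolventOf (A ω) (JA ω))
    (hJAinv : ∀ ω, IsResolventOf (graphInv (A ω)) (JAinv ω))
    (hJAmeas : ∀ x : H, Measurable fun ω => JA ω x)
    (hJA0 : (∫⁻ ω, (‖JA ω 0‖₊ : ℝ≥0∞) ^ 2 ∂P) < ⊤) :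
    (rmiOp fun x : H => ∫ ω, JA ω x ∂P) = (rmiOp fun x : H => ∫ ω, JA ω x ∂P) ∧
    (rmiOp fun x : H => ∫ ω, JA ω x ∂P)
      = graphInv (rmiOp fun x : H => ∫ ω, JAinv ω x ∂P) := by
  have hJAres : ∀ ω y, y - JA ω y ∈ A ω (JA ω y) := fun ω y => (hJA ω y _).mp rfl
  have hMoreau : ∀ ω y, JAinv ω y = y - JA ω y := by
    intro ω y
    rw [hJAinv ω y (y - JA ω y)]
    show y - (y - JA ω y) ∈ {x | (y - JA ω y) ∈ A ω x}
    simpa using hJAres ω y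
  -- nonexpansiveness
  have hne : ∀ ω x y, ‖JA ω x - JA ω y‖ ≤ ‖x - y‖ := by
    intro ω x y
    have hm := (hAmax ω).1 (hJAres ω x) (hJAres ω y)
    have h1 : ‖JA ω x - JA ω y‖ ^ 2 ≤ inner ℝ (JA ω x - JA ω y) (x - y) := by
      have e : (x - JA ω x) - (y - JA ω y) = (x - y) - (JA ω x - JA ω y) := by abel
      rw [e, inner_sub_right] at hm
      have := real_inner_self_eq_norm_sq (JA ω x - JA ω y)
      linarith
    have h2 : inner ℝ (JA ω x - JA ω y) (x - y) ≤ ‖JA ω x - JA ω y‖ * ‖x - y‖ :=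
      real_inner_le_norm _ _
    nlinarith [norm_nonneg (JA ω x - JA ω y), norm_nonneg (x - y)]
  -- integrability
  have hint0 : Integrable (fun ω => JA ω 0) P := by
    refine ⟨(hJAmeas 0).aestronglyMeasurable, ?_⟩
    show (∫⁻ ω, (‖JA ω 0‖₊ : ℝ≥0∞) ∂P) < ⊤
    have hbound : ∀ ω, (‖JA ω 0‖₊ : ℝ≥0∞) ≤ 1 + (‖JA ω 0‖₊ : ℝ≥0∞) ^ 2 := by
      intro ω
      rcases le_total ((‖JA ω 0‖₊ : ℝ≥0∞)) 1 with h | h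
      · exact le_trans h le_self_add
      · refine le_trans ?_ (le_add_self : _ ≤ 1 + (‖JA ω 0‖₊ : ℝ≥0∞) ^ 2)
        calc (‖JA ω 0‖₊ : ℝ≥0∞) = 1 * ‖JA ω 0‖₊ := (one_mul _).symm
          _ ≤ ‖JA ω 0‖₊ * ‖JA ω 0‖₊ := mul_le_mul_left h _
          _ = (‖JA ω 0‖₊ : ℝ≥0∞) ^ 2 := (sq _).symm
    calc (∫⁻ ω, (‖JA ω 0‖₊ : ℝ≥0∞) ∂P)
        ≤ ∫⁻ ω, (1 + (‖JA ω 0‖₊ : ℝ≥0∞) ^ 2) ∂P := lintegral_mono hbound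
      _ = 1 + ∫⁻ ω, (‖JA ω 0‖₊ : ℝ≥0∞) ^ 2 ∂P := by
          rw [lintegral_add_left measurable_const]; simp
      _ < ⊤ := ENNReal.add_lt_top.mpr ⟨ENNReal.one_lt_top, hJA0⟩
  have hint : ∀ y : H, Integrable (fun ω => JA ω y) P := by
    intro y
    refine Integrable.mono' (hint0.norm.add (integrable_const ‖y‖))
      (hJAmeas y).aestronglyMeasurable (Filter.Eventually.of_forall fun ω => ?_)
    calc ‖JA ω y‖ ≤ ‖JA ω y - JA ω 0‖ + ‖JA ω 0‖ := by
          simpa using norm_add_le (JA ω y - JA ω 0) (JA ω 0)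
      _ ≤ ‖y - 0‖ + ‖JA ω 0‖ := by linarith [hne ω y 0]
      _ = ‖JA ω 0‖ + ‖y‖ := by rw [sub_zero]; ring
  have hR' : ∀ y : H, (∫ ω, JAinv ω y ∂P) = y - ∫ ω, JA ω y ∂P := by
    intro y
    simp_rw [hMoreau]
    rw [integral_sub (integrable_const y) (hint y), integral_const]
    simp
  refine ⟨rfl, ?_⟩
  funext x
  ext u
  simp only [rmiOp, graphInv, Set.mem_setOf_eq, hR']
  constructor
  · intro h; rw [add_comm u x, h]; abel
  · intro h
    rw [sub_eq_iff_eq_add] at h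
    rw [add_comm x u]
    exact (add_left_cancel h).symm
end

section
/- Let (Ω, 𝓕, P) be a complete probability space, let H be a separable real Hilbert space, and let (A_ω)_{ω∈Ω} be a family of maximally monotone operators from H to 2^H such that for every 𝗑 ∈ H the map ω ↦ J_{A_ω} 𝗑 is measurable and ∫_Ω ‖J_{A_ω} 0‖² P(dω) < +∞. Then: (i) PE(A_ω)_{ω∈Ω} is maximally monotone; (ii) (PE(A_ω)_{ω∈Ω})⁻¹ = PE(A_ω⁻¹)_{ω∈Ω}; (iii) the resolvent of PE(A_ω)_{ω∈Ω} is 𝗑 ↦ ∫_Ω J_{A_ω} 𝗑 P(dω); (iv) the index-1 Yosida approximation satisfies (PE(A_ω)_{ω∈Ω}) □ Id_H = 𝗑 ↦ ∫_Ω (A_ω □ Id_H)(𝗑) P(dω), where A □ Id = Id − J_A; and (v) if τ > 0 and every A_ω is single-valued with dom A_ω = H and τ-cocoercive, then PE(A_ω)_{ω∈Ω} is τ-cocoercive. -/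
open MeasureTheory
open scoped ENNReal NNReal

section Aux

variable {Ω : Type*} [MeasurableSpace Ω] {P : Measure Ω} [IsProbabilityMeasure P]
variable {H : Type*} [NormedAddCommGroup H] [InnerProductSpace ℝ H] [CompleteSpace H]

/-- Jensen: `‖∫ f‖² ≤ ∫ ‖f‖²` on a probability space. -/
lemma aux_norm_sq_integral_le (f : Ω → H) (hf : Integrable f P)
    (hf2 : Integrable (fun ω => ‖f ω‖ ^ 2) P) :
    ‖∫ ω, f ω ∂P‖ ^ 2 ≤ ∫ ω, ‖f ω‖ ^ 2 ∂P := by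
  set m := ∫ ω, f ω ∂P with hm
  have hi : Integrable (fun ω => (inner ℝ (m) (f ω) : ℝ)) P := hf.const_inner m
  have h2 : (0:ℝ) ≤ ∫ ω, ‖f ω - m‖ ^ 2 ∂P := integral_nonneg fun ω => sq_nonneg _
  have hexp : ∀ ω, ‖f ω - m‖ ^ 2 = ‖f ω‖ ^ 2 - 2 * (inner ℝ m (f ω) : ℝ) + ‖m‖ ^ 2 := by
    intro ω
    rw [norm_sub_sq_real, real_inner_comm]
  have hsplit : ∫ ω, ‖f ω - m‖ ^ 2 ∂P
      = (∫ ω, ‖f ω‖ ^ 2 ∂P) - 2 * (∫ ω, (inner ℝ m (f ω) : ℝ) ∂P) + ‖m‖ ^ 2 := by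
    simp_rw [hexp]
    have hI1 : Integrable (fun ω => ‖f ω‖ ^ 2 - 2 * (inner ℝ m (f ω):ℝ)) P :=
      hf2.sub (hi.const_mul 2)
    have hI2 : Integrable (fun ω => (2:ℝ) * (inner ℝ m (f ω):ℝ)) P := hi.const_mul 2
    rw [integral_add hI1 (integrable_const _), integral_sub hf2 hI2,
      MeasureTheory.integral_const_mul, integral_const]
    simp
  have hip : (∫ ω, (inner ℝ m (f ω) : ℝ) ∂P) = ‖m‖ ^ 2 := by
    rw [integral_inner hf, ← hm, real_inner_self_eq_norm_sq]
  rw [hsplit, hip] at h2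
  linarith

lemma aux_key {τ : ℝ} (hτ : 0 ≤ τ) (f : Ω → H) (c : H) (hf : Integrable f P)
    (hf2 : Integrable (fun ω => ‖f ω‖ ^ 2) P)
    (hpt : ∀ ω, τ * ‖c - f ω‖ ^ 2 ≤ (inner ℝ (f ω) (c - f ω) : ℝ)) :
    τ * ‖c - ∫ ω, f ω ∂P‖ ^ 2 ≤ (inner ℝ (∫ ω, f ω ∂P) (c - ∫ ω, f ω ∂P) : ℝ) := by
  set m := ∫ ω, f ω ∂P with hm
  have hic : Integrable (fun ω => (inner ℝ c (f ω) : ℝ)) P := hf.const_inner c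
  have e1 : ∀ ω, ‖c - f ω‖ ^ 2 = ‖c‖ ^ 2 - 2 * (inner ℝ c (f ω) : ℝ) + ‖f ω‖ ^ 2 :=
    fun ω => norm_sub_sq_real _ _
  have e2 : ∀ ω, (inner ℝ (f ω) (c - f ω) : ℝ) = (inner ℝ c (f ω) : ℝ) - ‖f ω‖ ^ 2 := by
    intro ω
    rw [inner_sub_right, real_inner_self_eq_norm_sq, real_inner_comm]
  have hInt_cf2 : Integrable (fun ω => ‖c - f ω‖ ^ 2) P := by
    have : Integrable (fun ω => ‖c‖ ^ 2 - 2 * (inner ℝ c (f ω) : ℝ) + ‖f ω‖ ^ 2) P :=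
      ((integrable_const _).sub (hic.const_mul 2)).add hf2
    exact this.congr (Filter.Eventually.of_forall fun ω => (e1 ω).symm)
  have hInt_ip : Integrable (fun ω => (inner ℝ (f ω) (c - f ω) : ℝ)) P := by
    have : Integrable (fun ω => (inner ℝ c (f ω) : ℝ) - ‖f ω‖ ^ 2) P := hic.sub hf2
    exact this.congr (Filter.Eventually.of_forall fun ω => (e2 ω).symm)
  have hmono : τ * ∫ ω, ‖c - f ω‖ ^ 2 ∂P ≤ ∫ ω, (inner ℝ (f ω) (c - f ω) : ℝ) ∂P := by
    rw [← MeasureTheory.integral_const_mul]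
    exact integral_mono (hInt_cf2.const_mul τ) hInt_ip hpt
  have hval : ∫ ω, (inner ℝ (f ω) (c - f ω) : ℝ) ∂P
      = (inner ℝ c m : ℝ) - ∫ ω, ‖f ω‖ ^ 2 ∂P := by
    simp_rw [e2]
    rw [integral_sub hic hf2, integral_inner hf, ← hm]
  have hJ1 : ‖m‖ ^ 2 ≤ ∫ ω, ‖f ω‖ ^ 2 ∂P := aux_norm_sq_integral_le f hf hf2
  have hJ2 : ‖c - m‖ ^ 2 ≤ ∫ ω, ‖c - f ω‖ ^ 2 ∂P := by
    have hcf : Integrable (fun ω => c - f ω) P := (integrable_const c).sub hf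
    have := aux_norm_sq_integral_le (fun ω => c - f ω) hcf hInt_cf2
    rwa [integral_sub (integrable_const c) hf, integral_const, probReal_univ,
      one_smul, ← hm] at this
  have hfin : (inner ℝ m (c - m) : ℝ) = (inner ℝ c m : ℝ) - ‖m‖ ^ 2 := by
    rw [inner_sub_right, real_inner_self_eq_norm_sq, real_inner_comm]
  have h1 : τ * ‖c - m‖ ^ 2 ≤ τ * ∫ ω, ‖c - f ω‖ ^ 2 ∂P :=
    mul_le_mul_of_nonneg_left hJ2 hτ
  linarith [hmono, hJ1]

end Aux

/-- Corollary 3.10: properties of the resolvent expectation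
`PE(A_ω) = (x ↦ ∫ J_{A_ω} x dP)⁻¹ − Id`: (i) it is maximally monotone; (ii) its inverse is
the resolvent expectation of the inverses; (iii) its resolvent is `x ↦ ∫ J_{A_ω} x dP`;
(iv) its index-1 Yosida approximation is `x ↦ ∫ (x − J_{A_ω} x) dP`; (v) if `τ > 0` and
every `A_ω` is single-valued with full domain and `τ`-cocoercive, then `PE(A_ω)` is
`τ`-cocoercive. -/
theorem stmt_11
    {Ω : Type*} [MeasurableSpace Ω] {P : Measure Ω} [IsProbabilityMeasure P] [P.IsComplete]
    {H : Type*} [NormedAddCommGroup H] [InnerProductSpace ℝ H] [CompleteSpace H]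
    [SecondCountableTopology H] [MeasurableSpace H] [BorelSpace H]
    (A : Ω → H → Set H) (JA JAinv : Ω → H → H)
    (hAmax : ∀ ω, IsMaxMonotone (A ω))
    (hJA : ∀ ω, IsResolventOf (A ω) (JA ω))
    (hJAinv : ∀ ω, IsResolventOf (graphInv (A ω)) (JAinv ω))
    (hJAmeas : ∀ x : H, Measurable fun ω => JA ω x)
    (hJA0 : (∫⁻ ω, (‖JA ω 0‖₊ : ℝ≥0∞) ^ 2 ∂P) < ⊤) :
    IsMaxMonotone (rmiOp fun x : H => ∫ ω, JA ω x ∂P) ∧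
    graphInv (rmiOp fun x : H => ∫ ω, JA ω x ∂P)
      = rmiOp (fun x : H => ∫ ω, JAinv ω x ∂P) ∧
    IsResolventOf (rmiOp fun x : H => ∫ ω, JA ω x ∂P) (fun x : H => ∫ ω, JA ω x ∂P) ∧
    (∀ x : H, x - (∫ ω, JA ω x ∂P) = ∫ ω, (x - JA ω x) ∂P) ∧
    (∀ τ : ℝ, 0 < τ → ∀ a : Ω → H → H, (∀ ω (x : H), A ω x = {a ω x}) →
      (∀ ω (x y : H), τ * ‖a ω x - a ω y‖ ^ 2 ≤ inner ℝ (x - y) (a ω x - a ω y)) →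
      ∀ x y u v : H, u ∈ (rmiOp fun z : H => ∫ ω, JA ω z ∂P) x →
        v ∈ (rmiOp fun z : H => ∫ ω, JA ω z ∂P) y →
        τ * ‖u - v‖ ^ 2 ≤ inner ℝ (x - y) (u - v)) := by
  -- basic consequences of the resolvent identity
  have hmem : ∀ ω (x : H), x - JA ω x ∈ A ω (JA ω x) := fun ω x => (hJA ω x (JA ω x)).1 rfl
  have hfirm : ∀ ω (p q : H),
      (0:ℝ) ≤ inner ℝ (JA ω p - JA ω q) ((p - JA ω p) - (q - JA ω q)) :=
    fun ω p q => (hAmax ω).1 (hmem ω p) (hmem ω q)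
  have hfirm' : ∀ ω (p q : H),
      ‖JA ω p - JA ω q‖ ^ 2 ≤ (inner ℝ (p - q) (JA ω p - JA ω q) : ℝ) := by
    intro ω p q
    have h := hfirm ω p q
    have he : (p - JA ω p) - (q - JA ω q) = (p - q) - (JA ω p - JA ω q) := by abel
    rw [he, inner_sub_right, real_inner_self_eq_norm_sq, real_inner_comm] at h
    linarith
  have hnonexp : ∀ ω (p q : H), ‖JA ω p - JA ω q‖ ≤ ‖p - q‖ := by
    intro ω p q
    have h1 := hfirm' ω p q
    have h2 : (inner ℝ (p - q) (JA ω p - JA ω q) : ℝ) ≤ ‖p - q‖ * ‖JA ω p - JA ω q‖ :=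
      real_inner_le_norm _ _
    rcases eq_or_lt_of_le (norm_nonneg (JA ω p - JA ω q)) with h0 | h0
    · rw [← h0]; exact norm_nonneg _
    · refine le_of_mul_le_mul_right ?_ h0
      nlinarith
  -- integrability
  have hInt_sq0 : Integrable (fun ω => ‖JA ω 0‖ ^ 2) P := by
    refine ⟨(((hJAmeas 0).norm.pow_const 2)).aestronglyMeasurable, ?_⟩
    rw [hasFiniteIntegral_def]
    have : ∀ ω, ‖(‖JA ω 0‖ ^ 2)‖ₑ = (‖JA ω 0‖₊ : ℝ≥0∞) ^ 2 := by
      intro ω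
      rw [enorm_eq_nnnorm]
      simp [nnnorm_pow, nnnorm_norm, ENNReal.coe_pow]
    simpa only [this] using hJA0
  have hnorm0 : Integrable (fun ω => ‖JA ω 0‖) P := by
    have hg : Integrable (fun ω => 1 + ‖JA ω 0‖ ^ 2) P := (integrable_const 1).add hInt_sq0
    refine Integrable.mono' hg
      (hJAmeas 0).norm.aestronglyMeasurable (Filter.Eventually.of_forall fun ω => ?_)
    rw [Real.norm_eq_abs, abs_of_nonneg (norm_nonneg _)]
    nlinarith [sq_nonneg (‖JA ω 0‖ - 1)]
  have hIz : ∀ z : H, Integrable (fun ω => JA ω z) P := by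
    intro z
    refine Integrable.mono' (hnorm0.add (integrable_const ‖z‖))
      (hJAmeas z).aestronglyMeasurable (Filter.Eventually.of_forall fun ω => ?_)
    calc ‖JA ω z‖ = ‖(JA ω z - JA ω 0) + JA ω 0‖ := by congr 1; abel
      _ ≤ ‖JA ω z - JA ω 0‖ + ‖JA ω 0‖ := norm_add_le _ _
      _ ≤ ‖z - 0‖ + ‖JA ω 0‖ := by exact add_le_add_left (hnonexp ω z 0) _
      _ = ‖JA ω 0‖ + ‖z‖ := by rw [sub_zero]; ring
  have hIsq : ∀ p q : H, Integrable (fun ω => ‖JA ω p - JA ω q‖ ^ 2) P := by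
    intro p q
    refine Integrable.mono' (integrable_const (‖p - q‖ ^ 2))
      ((((hJAmeas p).sub (hJAmeas q)).norm.pow_const 2).aestronglyMeasurable)
      (Filter.Eventually.of_forall fun ω => ?_)
    rw [Real.norm_eq_abs, abs_of_nonneg (sq_nonneg _)]
    exact pow_le_pow_left₀ (norm_nonneg _) (hnonexp ω p q) 2
  -- the key integrated inequality
  have key : ∀ (τ : ℝ), 0 ≤ τ →
      (∀ ω (p q : H), τ * ‖(p - JA ω p) - (q - JA ω q)‖ ^ 2
        ≤ (inner ℝ (JA ω p - JA ω q) ((p - JA ω p) - (q - JA ω q)) : ℝ)) →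
      ∀ x y u v : H, (∫ ω, JA ω (x + u) ∂P) = x → (∫ ω, JA ω (y + v) ∂P) = y →
        τ * ‖u - v‖ ^ 2 ≤ (inner ℝ (x - y) (u - v) : ℝ) := by
    intro τ hτ hpt x y u v hx hy
    have hf : Integrable (fun ω => JA ω (x + u) - JA ω (y + v)) P := (hIz _).sub (hIz _)
    have hfc : ∀ ω, ((x + u) - (y + v)) - (JA ω (x + u) - JA ω (y + v))
        = ((x + u) - JA ω (x + u)) - ((y + v) - JA ω (y + v)) := by intro ω; abel
    have hptc : ∀ ω, τ * ‖((x + u) - (y + v)) - (JA ω (x + u) - JA ω (y + v))‖ ^ 2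
        ≤ (inner ℝ (JA ω (x + u) - JA ω (y + v))
            (((x + u) - (y + v)) - (JA ω (x + u) - JA ω (y + v))) : ℝ) := by
      intro ω
      rw [hfc ω]
      exact hpt ω _ _
    have h := aux_key hτ (fun ω => JA ω (x + u) - JA ω (y + v)) ((x + u) - (y + v))
      hf (hIsq _ _) hptc
    rw [integral_sub (hIz _) (hIz _), hx, hy] at h
    have h2 : ((x + u) - (y + v)) - (x - y) = u - v := by abel
    rwa [h2] at h
  refine ⟨⟨?_, ?_⟩, ?_, ?_, ?_, ?_⟩
  · -- monotone
    intro x u y v hu hv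
    have hpt0 : ∀ ω (p q : H), (0:ℝ) * ‖(p - JA ω p) - (q - JA ω q)‖ ^ 2
        ≤ (inner ℝ (JA ω p - JA ω q) ((p - JA ω p) - (q - JA ω q)) : ℝ) := by
      intro ω p q
      simpa using hfirm ω p q
    simpa using key 0 le_rfl hpt0 x y u v hu hv
  · -- maximal
    intro B hB hsub x v hv
    set ybar := ∫ ω, JA ω (x + v) ∂P with hybar
    have hmem' : (x + v) - ybar ∈ rmiOp (fun z : H => ∫ ω, JA ω z ∂P) ybar := by
      show (∫ ω, JA ω (ybar + ((x + v) - ybar)) ∂P) = ybar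
      rw [add_sub_cancel]
    have hB1 : (x + v) - ybar ∈ B ybar := hsub ybar hmem'
    have h0 : (0:ℝ) ≤ inner ℝ (x - ybar) (v - ((x + v) - ybar)) := hB hv hB1
    have he : v - ((x + v) - ybar) = -(x - ybar) := by abel
    rw [he, inner_neg_right, real_inner_self_eq_norm_sq] at h0
    have : x - ybar = 0 := by
      have : ‖x - ybar‖ ^ 2 ≤ 0 := by linarith
      have hn : ‖x - ybar‖ = 0 := by nlinarith [norm_nonneg (x - ybar), sq_nonneg ‖x - ybar‖]
      exact norm_eq_zero.mp hn
    have hx : ybar = x := by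
      have := sub_eq_zero.mp this
      exact this.symm
    show (∫ ω, JA ω (x + v) ∂P) = x
    rw [← hybar, hx]
  · -- inverse
    have hinv : ∀ ω (z : H), JAinv ω z = z - JA ω z := by
      intro ω z
      refine (hJAinv ω z (z - JA ω z)).2 ?_
      show z - JA ω z ∈ A ω (z - (z - JA ω z))
      rw [sub_sub_cancel]
      exact hmem ω z
    have hR' : ∀ z : H, (∫ ω, JAinv ω z ∂P) = z - ∫ ω, JA ω z ∂P := by
      intro z
      simp_rw [hinv]
      rw [integral_sub (integrable_const z) (hIz z), integral_const]
      simp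
    funext u
    ext x
    simp only [graphInv, rmiOp, Set.mem_setOf_eq]
    constructor
    · intro h
      rw [hR', add_comm u x, h, add_sub_cancel_left]
    · intro h
      rw [hR'] at h
      have h2 : u + x = u + ∫ ω, JA ω (u + x) ∂P := sub_eq_iff_eq_add.mp h
      have h3 : x = ∫ ω, JA ω (u + x) ∂P := add_left_cancel h2
      rw [add_comm x u]
      exact h3.symm
  · -- resolvent
    intro x y
    have he : y + (x - y) = x := by abel
    simp only [rmiOp, Set.mem_setOf_eq, he]
  · -- Yosida
    intro x
    rw [integral_sub (integrable_const x) (hIz x), integral_const]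
    simp
  · -- cocoercive
    intro τ hτ a hA hco x y u v hu hv
    have heq : ∀ ω (z : H), z - JA ω z = a ω (JA ω z) := by
      intro ω z
      have h := hmem ω z
      rw [hA] at h
      exact h
    have hpt : ∀ ω (p q : H), τ * ‖(p - JA ω p) - (q - JA ω q)‖ ^ 2
        ≤ (inner ℝ (JA ω p - JA ω q) ((p - JA ω p) - (q - JA ω q)) : ℝ) := by
      intro ω p q
      rw [heq ω p, heq ω q]
      exact hco ω (JA ω p) (JA ω q)
    exact key τ hτ.le hpt x y u v hu hv
end

section
/- Under the stated hypotheses, the proximity operators of the integral proximal mixture and comixture are given, for every 𝗑 ∈ X, by prox_{rmi(L_ω, f_ω)_{ω∈Ω}}(𝗑) = ∫_Ω L_ω*(prox_{f_ω**}(L_ω 𝗑)) μ(dω) and prox_{rcm(L_ω, f_ω)_{ω∈Ω}}(𝗑) = 𝗑 − ∫_Ω L_ω*(prox_{f_ω*}(L_ω 𝗑)) μ(dω), where f** = (f*)*. -/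
open MeasureTheory
open scoped ENNReal NNReal RealInnerProductSpace Topology

/-- Fenchel conjugate `f*(u) = ⨆ x, ⟪x, u⟫ − f x` of an extended-real-valued function. -/
noncomputable def fconj {H : Type*} [NormedAddCommGroup H] [InnerProductSpace ℝ H]
    (f : H → EReal) : H → EReal :=
  fun u => ⨆ x : H, ((inner ℝ x u : ℝ) : EReal) - f x

/-- Moreau envelope `(f □ Q)(x) = ⨅ y, f y + ½‖x − y‖²`. -/
noncomputable def morEnv {H : Type*} [NormedAddCommGroup H] [InnerProductSpace ℝ H]
    (f : H → EReal) : H → EReal :=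
  fun x => ⨅ y : H, f y + ((2⁻¹ * ‖x - y‖ ^ 2 : ℝ) : EReal)

/-- `p` is the proximity operator of `f`: for every `x`, `p x` minimizes
`y ↦ f y + ½‖x − y‖²`. -/
def IsProxOf {H : Type*} [NormedAddCommGroup H] [InnerProductSpace ℝ H]
    (f : H → EReal) (p : H → H) : Prop :=
  ∀ x y : H,
    f (p x) + ((2⁻¹ * ‖x - p x‖ ^ 2 : ℝ) : EReal) ≤ f y + ((2⁻¹ * ‖x - y‖ ^ 2 : ℝ) : EReal)

/-- `f ∈ Γ₀(H)`: proper (nowhere `−∞`, somewhere finite), lower semicontinuous and convex. -/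
def Gamma0 {H : Type*} [NormedAddCommGroup H] [InnerProductSpace ℝ H]
    (f : H → EReal) : Prop :=
  (∀ x, f x ≠ ⊥) ∧ (∃ x, f x ≠ ⊤) ∧ LowerSemicontinuous f ∧
    ∀ (x y : H) (a b : ℝ), 0 < a → 0 < b → a + b = 1 →
      f (a • x + b • y) ≤ (a : EReal) * f x + (b : EReal) * f y

/-- The subdifferential `∂F : x ↦ {u : ∀ y, ⟪y − x, u⟫ + F x ≤ F y}`. -/
def subdiff {X : Type*} [NormedAddCommGroup X] [InnerProductSpace ℝ X]
    (F : X → EReal) : X → Set X :=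
  fun x => {u | ∀ y : X, F x + ((inner ℝ (y - x) u : ℝ) : EReal) ≤ F y}

/-- The integral proximal mixture
`rmi(L_ω, f_ω) = (ξ ↦ ∫ (f_ω* □ Q_H)(L_ω ξ) dμ)* − Q_X`. -/
noncomputable def rmiFun {Ω : Type*} [MeasurableSpace Ω] (μ : Measure Ω)
    {X H : Type*} [NormedAddCommGroup X] [InnerProductSpace ℝ X]
    [NormedAddCommGroup H] [InnerProductSpace ℝ H]
    (L : Ω → X →L[ℝ] H) (f : Ω → H → EReal) : X → EReal :=
  fun ξ =>
    fconj (fun η : X => ((∫ ω, (morEnv (fconj (f ω)) (L ω η)).toReal ∂μ : ℝ) : EReal)) ξ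
      - ((2⁻¹ * ‖ξ‖ ^ 2 : ℝ) : EReal)

/-- The integral proximal comixture `rcm(L_ω, f_ω) = (rmi(L_ω, f_ω*))*`. -/
noncomputable def rcmFun {Ω : Type*} [MeasurableSpace Ω] (μ : Measure Ω)
    {X H : Type*} [NormedAddCommGroup X] [InnerProductSpace ℝ X]
    [NormedAddCommGroup H] [InnerProductSpace ℝ H]
    (L : Ω → X →L[ℝ] H) (f : Ω → H → EReal) : X → EReal :=
  fconj (rmiFun μ L (fun ω => fconj (f ω)))

lemma ereal_cases (x : EReal) : x = ⊥ ∨ (∃ t : ℝ, x = (t : EReal)) ∨ x = ⊤ := by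
  induction x using EReal.rec with
  | bot => exact Or.inl rfl
  | coe t => exact Or.inr (Or.inl ⟨t, rfl⟩)
  | top => exact Or.inr (Or.inr rfl)

section generic
variable {H : Type*} [NormedAddCommGroup H] [InnerProductSpace ℝ H]

lemma le_fconj (f : H → EReal) (y u : H) : ((⟪y, u⟫ : ℝ) : EReal) - f y ≤ fconj f u :=
  le_iSup (fun x : H => ((⟪x, u⟫ : ℝ) : EReal) - f x) y

lemma coe_le_fconj (f : H → EReal) {y : H} {t : ℝ} (hy : f y = (t : EReal)) (u : H) :
    ((⟪y, u⟫ - t : ℝ) : EReal) ≤ fconj f u := by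
  have := le_fconj f y u
  rwa [hy, ← EReal.coe_sub] at this

lemma fconj_ne_bot (f : H → EReal) {y : H} {t : ℝ} (hy : f y = (t : EReal)) (u : H) :
    fconj f u ≠ ⊥ := by
  intro h
  have := coe_le_fconj f hy u
  rw [h] at this
  exact absurd (le_bot_iff.mp this) (EReal.coe_ne_bot _)

lemma fconj_fconj_le (f : H → EReal) (x : H) : fconj (fconj f) x ≤ f x := by
  refine iSup_le fun u => ?_
  have h1 : ((⟪x, u⟫ : ℝ) : EReal) - f x ≤ fconj f u := le_fconj f x u
  have hc : (⟪u, x⟫ : ℝ) = ⟪x, u⟫ := real_inner_comm x u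
  rw [hc]
  rcases ereal_cases (f x) with hfx | ⟨t, hfx⟩ | hfx
  · rw [hfx, EReal.coe_sub_bot] at h1
    have h2 : fconj f u = ⊤ := top_le_iff.mp h1
    rw [h2, EReal.sub_top, hfx]
  · rw [hfx, ← EReal.coe_sub] at h1
    rw [hfx]
    calc ((⟪x, u⟫ : ℝ) : EReal) - fconj f u ≤ ((⟪x, u⟫ : ℝ) : EReal) - ((⟪x, u⟫ - t : ℝ) : EReal) :=
          EReal.sub_le_sub le_rfl h1
      _ = ((t : ℝ) : EReal) := by rw [← EReal.coe_sub]; norm_num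
  · rw [hfx]; exact le_top

lemma fconj_antitone {f g : H → EReal} (h : ∀ x, f x ≤ g x) (u : H) :
    fconj g u ≤ fconj f u :=
  iSup_le fun x => le_trans (EReal.sub_le_sub le_rfl (h x)) (le_fconj f x u)

lemma fconj3 (f : H → EReal) : fconj (fconj (fconj f)) = fconj f := by
  funext u
  exact le_antisymm (fconj_fconj_le (fconj f) u)
    (fconj_antitone (fun x => fconj_fconj_le f x) u)

lemma fconj_convex_real (f : H → EReal) {u v : H} {s1 s2 a b : ℝ}
    (hu : fconj f u = (s1 : EReal)) (hv : fconj f v = (s2 : EReal))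
    (ha : 0 ≤ a) (hb : 0 ≤ b) (hab : a + b = 1) :
    fconj f (a • u + b • v) ≤ ((a * s1 + b * s2 : ℝ) : EReal) := by
  refine iSup_le fun x => ?_
  rcases ereal_cases (f x) with hfx | ⟨t, hfx⟩ | hfx
  · exfalso
    have h1 := le_fconj f x u
    rw [hfx, EReal.coe_sub_bot, hu] at h1
    exact absurd (top_le_iff.mp h1) (by simp)
  · rw [hfx, ← EReal.coe_sub, EReal.coe_le_coe_iff]
    have h1 : ⟪x, u⟫ - t ≤ s1 := by
      have := le_fconj f x u
      rw [hfx, ← EReal.coe_sub, hu, EReal.coe_le_coe_iff] at this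
      exact this
    have h2 : ⟪x, v⟫ - t ≤ s2 := by
      have := le_fconj f x v
      rw [hfx, ← EReal.coe_sub, hv, EReal.coe_le_coe_iff] at this
      exact this
    have hx : (⟪x, a • u + b • v⟫ : ℝ) = a * ⟪x, u⟫ + b * ⟪x, v⟫ := by
      rw [inner_add_right, real_inner_smul_right, real_inner_smul_right]
    rw [hx]
    have e1 : a * ⟪x, u⟫ - a * t ≤ a * s1 := by
      rw [← mul_sub]; exact mul_le_mul_of_nonneg_left h1 ha
    have e2 : b * ⟪x, v⟫ - b * t ≤ b * s2 := by
      rw [← mul_sub]; exact mul_le_mul_of_nonneg_left h2 hb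
    have ht : a * t + b * t = t := by rw [← add_mul, hab, one_mul]
    linarith
  · rw [hfx, EReal.sub_top]
    exact bot_le

end generic

noncomputable def eVal {H : Type*} [NormedAddCommGroup H] [InnerProductSpace ℝ H]
    (f : H → EReal) (p : H → H) (z : H) : ℝ :=
  (fconj f (p z)).toReal + 2⁻¹ * ‖z - p z‖ ^ 2

section perOmega
variable {H : Type*} [NormedAddCommGroup H] [InnerProductSpace ℝ H]
variable {f : H → EReal} {p : H → H} {a as : H} {α αs : ℝ}

lemma gp_eq (hp : IsProxOf (fconj f) p) (hfa : f a = (α : EReal))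
    (hfsa : fconj f as = (αs : EReal)) (z : H) :
    fconj f (p z) = (((fconj f (p z)).toReal : ℝ) : EReal) := by
  have hnb : fconj f (p z) ≠ ⊥ := fconj_ne_bot f hfa _
  have hnt : fconj f (p z) ≠ ⊤ := by
    intro h
    have h2 := hp z as
    rw [h, hfsa, EReal.top_add_coe, ← EReal.coe_add] at h2
    exact absurd (top_le_iff.mp h2) (EReal.coe_ne_top _)
  exact (EReal.coe_toReal hnt hnb).symm

lemma prox_real (hp : IsProxOf (fconj f) p) (hfa : f a = (α : EReal))
    (hfsa : fconj f as = (αs : EReal)) (z : H) {y : H} {t : ℝ}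
    (hy : fconj f y = (t : EReal)) :
    eVal f p z ≤ t + 2⁻¹ * ‖z - y‖ ^ 2 := by
  have h := hp z y
  rw [hy, gp_eq hp hfa hfsa z, ← EReal.coe_add, ← EReal.coe_add, EReal.coe_le_coe_iff] at h
  exact h

lemma prox_subgrad (hp : IsProxOf (fconj f) p) (hfa : f a = (α : EReal))
    (hfsa : fconj f as = (αs : EReal)) (z y : H) :
    (((fconj f (p z)).toReal + ⟪y - p z, z - p z⟫ : ℝ) : EReal) ≤ fconj f y := by
  rcases ereal_cases (fconj f y) with hy | ⟨t, hy⟩ | hy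
  · exact absurd hy (fconj_ne_bot f hfa y)
  · rw [hy, EReal.coe_le_coe_iff]
    set gp := (fconj f (p z)).toReal with hgp
    set d := y - p z with hd
    set A := z - p z with hA
    have key : ∀ s : ℝ, 0 < s → s ≤ 1 → gp + ⟪d, A⟫ ≤ t + s * (2⁻¹ * ‖d‖ ^ 2) := by
      intro s hs hs1
      have hcvx := fconj_convex_real f (gp_eq hp hfa hfsa z) hy
        (by linarith : (0:ℝ) ≤ 1 - s) (le_of_lt hs) (by ring)
      have hprox := hp z ((1 - s) • p z + s • y)
      rw [gp_eq hp hfa hfsa z] at hprox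
      have hchain := le_trans hprox (add_le_add_left hcvx _)
      rw [← EReal.coe_add, ← EReal.coe_add, EReal.coe_le_coe_iff] at hchain
      have hw : z - ((1 - s) • p z + s • y) = A - s • d := by
        rw [hA, hd]; module
      rw [hw] at hchain
      have hnorm : ‖A - s • d‖ ^ 2 = ‖A‖ ^ 2 - 2 * (s * ⟪A, d⟫) + s ^ 2 * ‖d‖ ^ 2 := by
        rw [norm_sub_sq_real, real_inner_smul_right, norm_smul]
        rw [Real.norm_eq_abs, abs_of_pos hs]
        ring
      rw [hnorm] at hchain
      have hcomm : ⟪d, A⟫ = ⟪A, d⟫ := real_inner_comm A d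
      nlinarith [hchain, hs]
    refine le_of_forall_pos_le_add fun ε hε => ?_
    set D := 2⁻¹ * ‖d‖ ^ 2 with hD
    have hDnn : 0 ≤ D := by positivity
    have hsd : 0 < ε / (D + 1) := by positivity
    set s := min 1 (ε / (D + 1)) with hss
    have hs : 0 < s := lt_min one_pos hsd
    have h1 := key s hs (min_le_left _ _)
    have h2 : s * D ≤ ε := by
      calc s * D ≤ (ε / (D + 1)) * D :=
            mul_le_mul_of_nonneg_right (min_le_right _ _) hDnn
        _ ≤ ε := by
            rw [div_mul_eq_mul_div, div_le_iff₀ (by linarith)]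
            nlinarith
    linarith
  · rw [hy]; exact le_top

lemma prox_subgrad_real (hp : IsProxOf (fconj f) p) (hfa : f a = (α : EReal))
    (hfsa : fconj f as = (αs : EReal)) (z y : H) :
    (fconj f (p z)).toReal + ⟪p y - p z, z - p z⟫ ≤ (fconj f (p y)).toReal := by
  have h := prox_subgrad hp hfa hfsa z (p y)
  rw [gp_eq hp hfa hfsa y, EReal.coe_le_coe_iff] at h
  exact h

lemma env_eq (hp : IsProxOf (fconj f) p) (hfa : f a = (α : EReal))
    (hfsa : fconj f as = (αs : EReal)) (z : H) :
    morEnv (fconj f) z = ((eVal f p z : ℝ) : EReal) := by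
  refine le_antisymm ?_ ?_
  · refine le_trans (iInf_le _ (p z)) ?_
    rw [gp_eq hp hfa hfsa z, ← EReal.coe_add]
    exact le_of_eq rfl
  · refine le_iInf fun y => ?_
    rcases ereal_cases (fconj f y) with hy | ⟨t, hy⟩ | hy
    · exact absurd hy (fconj_ne_bot f hfa y)
    · rw [hy, ← EReal.coe_add, EReal.coe_le_coe_iff]
      exact prox_real hp hfa hfsa z hy
    · rw [hy, EReal.top_add_coe]; exact le_top

lemma env_lb (hp : IsProxOf (fconj f) p) (hfa : f a = (α : EReal))
    (hfsa : fconj f as = (αs : EReal)) (z z' : H) :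
    eVal f p z + ⟪z - p z, z' - z⟫ ≤ eVal f p z' := by
  have h := prox_subgrad_real hp hfa hfsa z z'
  have hPA : ⟪p z' - p z, z - p z⟫
      = ⟪z' - z, z - p z⟫ - ⟪z' - p z', z - p z⟫ + ‖z - p z‖ ^ 2 := by
    rw [show p z' - p z = ((z' - z) - (z' - p z')) + (z - p z) by module,
      inner_add_left, inner_sub_left, real_inner_self_eq_norm_sq]
  have hsq : (0:ℝ) ≤ ‖(z' - p z') - (z - p z)‖ ^ 2 := sq_nonneg _
  have hex : ‖(z' - p z') - (z - p z)‖ ^ 2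
      = ‖z' - p z'‖ ^ 2 - 2 * ⟪z' - p z', z - p z⟫ + ‖z - p z‖ ^ 2 := norm_sub_sq_real _ _
  have hcm : ⟪z - p z, z' - z⟫ = ⟪z' - z, z - p z⟫ := real_inner_comm _ _
  unfold eVal
  linarith

lemma env_ub (hp : IsProxOf (fconj f) p) (hfa : f a = (α : EReal))
    (hfsa : fconj f as = (αs : EReal)) (z z' : H) :
    eVal f p z' ≤ eVal f p z + ⟪z - p z, z' - z⟫ + 2⁻¹ * ‖z' - z‖ ^ 2 := by
  have h := prox_real hp hfa hfsa z' (gp_eq hp hfa hfsa z)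
  have hsplit : z' - p z = (z - p z) + (z' - z) := by module
  have hnorm : ‖z' - p z‖ ^ 2 = ‖z - p z‖ ^ 2 + 2 * ⟪z - p z, z' - z⟫ + ‖z' - z‖ ^ 2 := by
    rw [hsplit]; exact norm_add_sq_real _ _
  unfold eVal at h ⊢
  linarith [h, hnorm]

lemma prox_fenchel (hp : IsProxOf (fconj f) p) (hfa : f a = (α : EReal))
    (hfsa : fconj f as = (αs : EReal)) (z : H) :
    fconj (fconj f) (z - p z) = ((⟪p z, z - p z⟫ - (fconj f (p z)).toReal : ℝ) : EReal) := by
  refine le_antisymm ?_ ?_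
  · refine iSup_le fun y => ?_
    rcases ereal_cases (fconj f y) with hy | ⟨t, hy⟩ | hy
    · exact absurd hy (fconj_ne_bot f hfa y)
    · rw [hy, ← EReal.coe_sub, EReal.coe_le_coe_iff]
      have h := prox_subgrad hp hfa hfsa z y
      rw [hy, EReal.coe_le_coe_iff] at h
      have hexp : ⟪y - p z, z - p z⟫ = ⟪y, z - p z⟫ - ⟪p z, z - p z⟫ := by
        rw [inner_sub_left]
      linarith
    · rw [hy, EReal.sub_top]; exact bot_le
  · have h := le_fconj (fconj f) (p z) (z - p z)
    rw [gp_eq hp hfa hfsa z, ← EReal.coe_sub] at h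
    exact h

lemma prox_firm (hp : IsProxOf (fconj f) p) (hfa : f a = (α : EReal))
    (hfsa : fconj f as = (αs : EReal)) (z1 z2 : H) :
    ‖p z1 - p z2‖ ^ 2 ≤ ⟪p z1 - p z2, z1 - z2⟫ := by
  have h1 := prox_subgrad_real hp hfa hfsa z1 z2
  have h2 := prox_subgrad_real hp hfa hfsa z2 z1
  have e1 : ⟪p z2 - p z1, z1 - p z1⟫ = -⟪p z1 - p z2, z1 - p z1⟫ := by
    rw [show p z2 - p z1 = -(p z1 - p z2) by module, inner_neg_left]
  have e2 : ⟪p z1 - p z2, z2 - p z2⟫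
      = ⟪p z1 - p z2, z1 - p z1⟫ - ⟪p z1 - p z2, z1 - z2⟫ + ‖p z1 - p z2‖ ^ 2 := by
    rw [show z2 - p z2 = ((z1 - p z1) - (z1 - z2)) + (p z1 - p z2) by module,
      inner_add_right, inner_sub_right, real_inner_self_eq_norm_sq]
  linarith

lemma prox_lip (hp : IsProxOf (fconj f) p) (hfa : f a = (α : EReal))
    (hfsa : fconj f as = (αs : EReal)) (z1 z2 : H) :
    ‖p z1 - p z2‖ ≤ ‖z1 - z2‖ := by
  have h := prox_firm hp hfa hfsa z1 z2
  have hcs := real_inner_le_norm (p z1 - p z2) (z1 - z2)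
  nlinarith [norm_nonneg (p z1 - p z2), norm_nonneg (z1 - z2)]

lemma prox_mono (hp : IsProxOf (fconj f) p) (hfa : f a = (α : EReal))
    (hfsa : fconj f as = (αs : EReal)) (z1 z2 : H) :
    0 ≤ ⟪(z1 - p z1) - (z2 - p z2), z1 - z2⟫ := by
  have h := prox_firm hp hfa hfsa z1 z2
  have hcs := real_inner_le_norm (p z1 - p z2) (z1 - z2)
  have hn : ⟪(z1 - p z1) - (z2 - p z2), z1 - z2⟫
      = ⟪z1 - z2, z1 - z2⟫ - ⟪p z1 - p z2, z1 - z2⟫ := by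
    rw [show (z1 - p z1) - (z2 - p z2) = (z1 - z2) - (p z1 - p z2) by module, inner_sub_left]
  rw [hn, real_inner_self_eq_norm_sq]
  nlinarith [norm_nonneg (p z1 - p z2), norm_nonneg (z1 - z2),
    sq_nonneg (‖z1 - z2‖ - ‖p z1 - p z2‖)]

end perOmega

section perOmega2
variable {H : Type*} [NormedAddCommGroup H] [InnerProductSpace ℝ H]
variable {f : H → EReal} {p : H → H} {a as : H} {α αs : ℝ}

lemma F2_ne_bot (hp : IsProxOf (fconj f) p) (hfa : f a = (α : EReal))
    (hfsa : fconj f as = (αs : EReal)) (u : H) : fconj (fconj f) u ≠ ⊥ :=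
  fconj_ne_bot (fconj f) (gp_eq hp hfa hfsa 0) u

lemma F2_young (hp : IsProxOf (fconj f) p) (hfa : f a = (α : EReal))
    (hfsa : fconj f as = (αs : EReal)) (z u : H) :
    ((⟪p z, u⟫ - (fconj f (p z)).toReal : ℝ) : EReal) ≤ fconj (fconj f) u :=
  coe_le_fconj (fconj f) (gp_eq hp hfa hfsa z) u

lemma F2_min (hp : IsProxOf (fconj f) p) (hfa : f a = (α : EReal))
    (hfsa : fconj f as = (αs : EReal)) (z u : H) :
    fconj (fconj f) (z - p z) + ((2⁻¹ * ‖z - (z - p z)‖ ^ 2 : ℝ) : EReal) ≤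
      fconj (fconj f) u + ((2⁻¹ * ‖z - u‖ ^ 2 : ℝ) : EReal) := by
  rcases ereal_cases (fconj (fconj f) u) with hu | ⟨t, hu⟩ | hu
  · exact absurd hu (F2_ne_bot hp hfa hfsa u)
  · have hy := F2_young hp hfa hfsa z u
    rw [hu, EReal.coe_le_coe_iff] at hy
    rw [hu, prox_fenchel hp hfa hfsa z, ← EReal.coe_add, ← EReal.coe_add,
      EReal.coe_le_coe_iff, sub_sub_cancel]
    have hzu : ‖z - u‖ ^ 2 = ‖p z‖ ^ 2 + 2 * ⟪p z, (z - p z) - u⟫ + ‖(z - p z) - u‖ ^ 2 := by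
      rw [show z - u = p z + ((z - p z) - u) by module]
      exact norm_add_sq_real _ _
    have hin : ⟪p z, (z - p z) - u⟫ = ⟪p z, z - p z⟫ - ⟪p z, u⟫ := inner_sub_right _ _ _
    nlinarith [sq_nonneg ‖(z - p z) - u‖]
  · rw [hu, EReal.top_add_coe]
    exact le_top

lemma prox_moreau (hp : IsProxOf (fconj f) p) (hfa : f a = (α : EReal))
    (hfsa : fconj f as = (αs : EReal)) {q : H → H}
    (hq : IsProxOf (fconj (fconj f)) q) (z : H) : q z = z - p z := by
  have hAval := prox_fenchel hp hfa hfsa z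
  -- q z has real conjugate value
  have hqne : fconj (fconj f) (q z) ≠ ⊥ := F2_ne_bot hp hfa hfsa _
  have hqnt : fconj (fconj f) (q z) ≠ ⊤ := by
    intro h
    have h2 := hq z (z - p z)
    rw [h, hAval, EReal.top_add_coe, ← EReal.coe_add] at h2
    exact absurd (top_le_iff.mp h2) (EReal.coe_ne_top _)
  have hqval : fconj (fconj f) (q z) = (((fconj (fconj f) (q z)).toReal : ℝ) : EReal) :=
    (EReal.coe_toReal hqnt hqne).symm
  set tq := (fconj (fconj f) (q z)).toReal with htq
  set V1 := ⟪p z, z - p z⟫ - (fconj f (p z)).toReal with hV1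
  -- the two minimality inequalities
  have e1 : tq + 2⁻¹ * ‖z - q z‖ ^ 2 ≤ V1 + 2⁻¹ * ‖z - (z - p z)‖ ^ 2 := by
    have h2 := hq z (z - p z)
    rw [hqval, hAval, ← EReal.coe_add, ← EReal.coe_add, EReal.coe_le_coe_iff] at h2
    exact h2
  have e2 : V1 + 2⁻¹ * ‖z - (z - p z)‖ ^ 2 ≤ tq + 2⁻¹ * ‖z - q z‖ ^ 2 := by
    have h2 := F2_min hp hfa hfsa z (q z)
    rw [hqval, hAval, ← EReal.coe_add, ← EReal.coe_add, EReal.coe_le_coe_iff] at h2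
    exact h2
  -- midpoint
  have hmid := F2_min hp hfa hfsa z ((2⁻¹ : ℝ) • q z + (2⁻¹ : ℝ) • (z - p z))
  have hcvx := fconj_convex_real (fconj f) hqval hAval (by norm_num : (0:ℝ) ≤ 2⁻¹)
    (by norm_num : (0:ℝ) ≤ 2⁻¹) (by norm_num)
  have hchain := le_trans hmid (add_le_add_left hcvx _)
  rw [hAval, ← EReal.coe_add, ← EReal.coe_add, EReal.coe_le_coe_iff] at hchain
  -- compute the midpoint distance
  have hmm : z - ((2⁻¹ : ℝ) • q z + (2⁻¹ : ℝ) • (z - p z))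
      = (2⁻¹ : ℝ) • (z - q z) + (2⁻¹ : ℝ) • (z - (z - p z)) := by module
  have hnm : ‖z - ((2⁻¹ : ℝ) • q z + (2⁻¹ : ℝ) • (z - p z))‖ ^ 2
      = 2⁻¹ * ‖z - q z‖ ^ 2 + 2⁻¹ * ‖z - (z - p z)‖ ^ 2
        - 4⁻¹ * ‖(z - q z) - (z - (z - p z))‖ ^ 2 := by
    rw [hmm, norm_add_sq_real, norm_smul, norm_smul, real_inner_smul_left,
      real_inner_smul_right, norm_sub_sq_real (z - q z) (z - (z - p z))]
    simp [Real.norm_eq_abs, abs_of_pos]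
    ring
  rw [hnm] at hchain
  have hz : ‖(z - q z) - (z - (z - p z))‖ ^ 2 ≤ 0 := by nlinarith
  have hn0 : ‖(z - q z) - (z - (z - p z))‖ = 0 := by
    nlinarith [norm_nonneg ((z - q z) - (z - (z - p z)))]
  have hz0 : z - q z = z - (z - p z) := sub_eq_zero.mp (norm_eq_zero.mp hn0)
  exact sub_right_inj.mp hz0

lemma env2_eq (hp : IsProxOf (fconj f) p) (hfa : f a = (α : EReal))
    (hfsa : fconj f as = (αs : EReal)) {q : H → H}
    (hq : IsProxOf (fconj (fconj f)) q) (z : H) :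
    eVal (fconj f) q z = 2⁻¹ * ‖z‖ ^ 2 - eVal f p z := by
  unfold eVal
  rw [prox_moreau hp hfa hfsa hq z, prox_fenchel hp hfa hfsa z, EReal.toReal_coe]
  have h1 : z - (z - p z) = p z := by module
  rw [h1]
  have h2 : ‖p z + (z - p z)‖ ^ 2 = ‖p z‖ ^ 2 + 2 * ⟪p z, z - p z⟫ + ‖z - p z‖ ^ 2 :=
    norm_add_sq_real _ _
  rw [show p z + (z - p z) = z by module] at h2
  linarith

lemma env_le (hp : IsProxOf (fconj f) p) (hfa : f a = (α : EReal))
    (hfsa : fconj f as = (αs : EReal)) (z : H) :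
    eVal f p z ≤ αs + 2⁻¹ * ‖z - as‖ ^ 2 :=
  prox_real hp hfa hfsa z hfsa

lemma env_ge (hp : IsProxOf (fconj f) p) (hfa : f a = (α : EReal))
    (hfsa : fconj f as = (αs : EReal)) (z : H) :
    ⟪a, z⟫ - α - 2⁻¹ * ‖a‖ ^ 2 ≤ eVal f p z := by
  have hyoung := coe_le_fconj f hfa (p z)
  rw [gp_eq hp hfa hfsa z, EReal.coe_le_coe_iff] at hyoung
  have hsq : (0:ℝ) ≤ ‖a - (z - p z)‖ ^ 2 := sq_nonneg _
  have hex : ‖a - (z - p z)‖ ^ 2 = ‖a‖ ^ 2 - 2 * ⟪a, z - p z⟫ + ‖z - p z‖ ^ 2 :=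
    norm_sub_sq_real _ _
  have hin : ⟪a, z - p z⟫ = ⟪a, z⟫ - ⟪a, p z⟫ := inner_sub_right _ _ _
  unfold eVal
  linarith

lemma dist_prox_sq_bound (hp : IsProxOf (fconj f) p) (hfa : f a = (α : EReal))
    (hfsa : fconj f as = (αs : EReal)) (z : H) :
    ‖z - p z‖ ^ 2 ≤ 4 * |αs| + 4 * |α| + 6 * ‖a‖ ^ 2 + 6 * ‖z‖ ^ 2 + 4 * ‖as‖ ^ 2 := by
  have hE1 := env_le hp hfa hfsa z
  have hE2 : ⟪a, p z⟫ - α ≤ (fconj f (p z)).toReal := by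
    have hyoung := coe_le_fconj f hfa (p z)
    rwa [gp_eq hp hfa hfsa z, EReal.coe_le_coe_iff] at hyoung
  have hE3 : -(‖a‖ * ‖p z‖) ≤ ⟪a, p z⟫ := neg_le_of_abs_le (abs_real_inner_le_norm a (p z))
  have hE4 : ‖p z‖ ≤ ‖z‖ + ‖z - p z‖ := by
    calc ‖p z‖ = ‖z - (z - p z)‖ := by rw [show z - (z - p z) = p z by module]
      _ ≤ ‖z‖ + ‖z - p z‖ := norm_sub_le _ _
  have hE5 : ‖z - as‖ ≤ ‖z‖ + ‖as‖ := norm_sub_le _ _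
  have hE6 : ‖z - as‖ ^ 2 ≤ 2 * ‖z‖ ^ 2 + 2 * ‖as‖ ^ 2 := by
    nlinarith [norm_nonneg (z - as), norm_nonneg z, norm_nonneg as, sq_nonneg (‖z‖ - ‖as‖)]
  have hA1 : αs ≤ |αs| := le_abs_self αs
  have hA2 : α ≤ |α| := le_abs_self α
  have hprod : ‖a‖ * ‖p z‖ ≤ ‖a‖ * ‖z‖ + ‖a‖ * ‖z - p z‖ := by
    have := mul_le_mul_of_nonneg_left hE4 (norm_nonneg a)
    linarith [this, (mul_add ‖a‖ ‖z‖ ‖z - p z‖).symm.le]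
  have hab1 : ‖a‖ * ‖z‖ ≤ 2⁻¹ * ‖a‖ ^ 2 + 2⁻¹ * ‖z‖ ^ 2 := by nlinarith [sq_nonneg (‖a‖ - ‖z‖)]
  have hab2 : ‖a‖ * ‖z - p z‖ ≤ ‖a‖ ^ 2 + 4⁻¹ * ‖z - p z‖ ^ 2 := by
    nlinarith [sq_nonneg (‖a‖ - 2⁻¹ * ‖z - p z‖)]
  unfold eVal at hE1
  linarith

end perOmega2

section perOmega3
variable {H : Type*} [NormedAddCommGroup H] [InnerProductSpace ℝ H]
variable {f : H → EReal} {p : H → H} {a as : H} {α αs : ℝ}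

lemma env_cont (hp : IsProxOf (fconj f) p) (hfa : f a = (α : EReal))
    (hfsa : fconj f as = (αs : EReal)) : Continuous (fun z => eVal f p z) := by
  rw [continuous_iff_continuousAt]
  intro z0
  apply continuousAt_of_locally_lipschitz one_pos (2 * ‖z0 - p z0‖ + 3)
  intro y hy
  rw [Real.dist_eq, dist_eq_norm] at *
  have hlow := env_lb hp hfa hfsa z0 y
  have hhigh := env_lb hp hfa hfsa y z0
  have h1 : |⟪z0 - p z0, y - z0⟫| ≤ ‖z0 - p z0‖ * ‖y - z0‖ := abs_real_inner_le_norm _ _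
  have h2 : |⟪y - p y, z0 - y⟫| ≤ ‖y - p y‖ * ‖z0 - y‖ := abs_real_inner_le_norm _ _
  have h3 : ‖y - p y‖ ≤ ‖z0 - p z0‖ + 2 * ‖y - z0‖ := by
    have ht : y - p y = (y - z0) + (z0 - p z0) + (p z0 - p y) := by module
    calc ‖y - p y‖ ≤ ‖(y - z0) + (z0 - p z0)‖ + ‖p z0 - p y‖ := by rw [ht]; exact norm_add_le _ _
      _ ≤ ‖y - z0‖ + ‖z0 - p z0‖ + ‖p z0 - p y‖ := by linarith [norm_add_le (y - z0) (z0 - p z0)]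
      _ ≤ ‖z0 - p z0‖ + 2 * ‖y - z0‖ := by
          have := prox_lip hp hfa hfsa z0 y
          rw [show ‖z0 - y‖ = ‖y - z0‖ from norm_sub_rev z0 y] at this
          linarith
  have h4 : ‖z0 - y‖ = ‖y - z0‖ := norm_sub_rev z0 y
  have hyb : ‖y - z0‖ < 1 := hy
  rw [abs_le]
  constructor
  · have : -(‖z0 - p z0‖ * ‖y - z0‖) ≤ ⟪z0 - p z0, y - z0⟫ := neg_le_of_abs_le h1
    nlinarith [norm_nonneg (y - z0), norm_nonneg (z0 - p z0)]
  · have : ⟪y - p y, z0 - y⟫ ≥ -(‖y - p y‖ * ‖z0 - y‖) := neg_le_of_abs_le h2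
    nlinarith [norm_nonneg (y - z0), norm_nonneg (z0 - p z0), norm_nonneg (y - p y)]

lemma env_smono (hp : IsProxOf (fconj f) p) (hfa : f a = (α : EReal))
    (hfsa : fconj f as = (αs : EReal)) (z : H) {t t' : ℝ} (h : t ≤ t') :
    ⟪t • z - p (t • z), z⟫ ≤ ⟪t' • z - p (t' • z), z⟫ := by
  rcases eq_or_lt_of_le h with rfl | hlt
  · exact le_rfl
  · have h0 := prox_mono hp hfa hfsa (t' • z) (t • z)
    have hd : t' • z - t • z = (t' - t) • z := by module
    rw [hd, real_inner_smul_right, inner_sub_left] at h0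
    nlinarith [h0, sub_pos.mpr hlt]

lemma env_tendsto (hp : IsProxOf (fconj f) p) (hfa : f a = (α : EReal))
    (hfsa : fconj f as = (αs : EReal)) (z : H) :
    Filter.Tendsto
      (fun n : ℕ => ∑ k ∈ Finset.range n,
        (n : ℝ)⁻¹ * ⟪((k : ℝ) / n) • z - p ((((k : ℝ) / n)) • z), z⟫)
      Filter.atTop (𝓝 (eVal f p z - eVal f p 0)) := by
  set s : ℝ → ℝ := fun t => ⟪t • z - p (t • z), z⟫ with hs
  set D := eVal f p z - eVal f p 0 with hD
  set Lsum : ℕ → ℝ := fun n => ∑ k ∈ Finset.range n, (n : ℝ)⁻¹ * s ((k : ℝ) / n) with hLsum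
  have key : ∀ n : ℕ, 1 ≤ n → Lsum n ≤ D ∧ D - Lsum n ≤ (s 1 - s 0) / n := by
    intro n hn
    have hnpos : (0 : ℝ) < n := by exact_mod_cast hn
    have hstep : ∀ k : ℕ, k < n →
        (n : ℝ)⁻¹ * s ((k : ℝ) / n)
          ≤ eVal f p ((((k : ℝ) + 1) / n) • z) - eVal f p (((k : ℝ) / n) • z) ∧
        eVal f p ((((k : ℝ) + 1) / n) • z) - eVal f p (((k : ℝ) / n) • z)
          ≤ (n : ℝ)⁻¹ * s (((k : ℝ) + 1) / n) := by
      intro k hk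
      have hdiff : (((k : ℝ) + 1) / n) • z - ((k : ℝ) / n) • z = (n : ℝ)⁻¹ • z := by
        have hq : ((k : ℝ) + 1) / n - (k : ℝ) / n = (n : ℝ)⁻¹ := by field_simp; ring
        rw [← sub_smul, hq]
      constructor
      · have hl := env_lb hp hfa hfsa (((k : ℝ) / n) • z) ((((k : ℝ) + 1) / n) • z)
        rw [hdiff, real_inner_smul_right] at hl
        linarith
      · have hl := env_lb hp hfa hfsa ((((k : ℝ) + 1) / n) • z) (((k : ℝ) / n) • z)
        have hdiff2 : ((k : ℝ) / n) • z - ((((k : ℝ) + 1) / n)) • z = -((n : ℝ)⁻¹ • z) := by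
          rw [← hdiff]; module
        rw [hdiff2, inner_neg_right, real_inner_smul_right] at hl
        linarith
    have htel : ∑ k ∈ Finset.range n,
        (eVal f p ((((k : ℝ) + 1) / n) • z) - eVal f p (((k : ℝ) / n) • z)) = D := by
      have := Finset.sum_range_sub (fun k : ℕ => eVal f p (((k : ℝ) / n) • z)) n
      simp only [Nat.cast_add, Nat.cast_one] at this
      rw [this]
      have h1 : ((n : ℝ) / n) • z = z := by
        rw [div_self (ne_of_gt hnpos), one_smul]
      have h0 : ((0 : ℕ) : ℝ) / n = 0 := by simp
      rw [h1]
      simp [hD]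
    have hL : Lsum n ≤ D := by
      rw [← htel, hLsum]
      exact Finset.sum_le_sum fun k hk => (hstep k (Finset.mem_range.mp hk)).1
    have hU : D ≤ ∑ k ∈ Finset.range n, (n : ℝ)⁻¹ * s (((k : ℝ) + 1) / n) := by
      rw [← htel]
      exact Finset.sum_le_sum fun k hk => (hstep k (Finset.mem_range.mp hk)).2
    refine ⟨hL, ?_⟩
    have hUL : ∑ k ∈ Finset.range n, (n : ℝ)⁻¹ * s (((k : ℝ) + 1) / n) - Lsum n
        = (n : ℝ)⁻¹ * s ((n : ℝ) / n) - (n : ℝ)⁻¹ * s (((0 : ℕ) : ℝ) / n) := by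
      rw [hLsum, ← Finset.sum_sub_distrib]
      have := Finset.sum_range_sub (fun k : ℕ => (n : ℝ)⁻¹ * s ((k : ℝ) / n)) n
      simp only [Nat.cast_add, Nat.cast_one] at this
      rw [this]
    have hs1 : ((n : ℝ)) / n = 1 := div_self (ne_of_gt hnpos)
    have hs0 : (((0 : ℕ) : ℝ)) / n = 0 := by simp
    rw [hs1, hs0] at hUL
    have : D - Lsum n ≤ (n : ℝ)⁻¹ * s 1 - (n : ℝ)⁻¹ * s 0 := by linarith
    calc D - Lsum n ≤ (n : ℝ)⁻¹ * s 1 - (n : ℝ)⁻¹ * s 0 := this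
      _ = (s 1 - s 0) / n := by ring
  have hmono : s 0 ≤ s 1 := env_smono hp hfa hfsa z zero_le_one
  have hz : Filter.Tendsto (fun n : ℕ => Lsum n - D) Filter.atTop (𝓝 0) := by
    refine squeeze_zero_norm' (a := fun n : ℕ => (s 1 - s 0) / (n:ℝ)) ?_
      (tendsto_const_div_atTop_nhds_zero_nat _)
    filter_upwards [Filter.eventually_ge_atTop 1] with n hn
    obtain ⟨h1, h2⟩ := key n hn
    rw [Real.norm_eq_abs, abs_sub_comm, abs_of_nonneg (by linarith)]
    exact h2
  have := hz.add_const D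
  simpa using this

end perOmega3

section perOmega4
variable {H : Type*} [NormedAddCommGroup H] [InnerProductSpace ℝ H]
variable {f : H → EReal} {p : H → H} {a as : H} {α αs : ℝ}

lemma env_sup_ub (hp : IsProxOf (fconj f) p) (hfa : f a = (α : EReal))
    (hfsa : fconj f as = (αs : EReal)) {x0 : H} {t0 : ℝ} (hx0 : fconj f x0 = (t0 : EReal))
    (z : H) : eVal f p z - 2⁻¹ * ‖z - x0‖ ^ 2 ≤ t0 := by
  have := prox_real hp hfa hfsa z hx0
  linarith

lemma env_sup_approx (hp : IsProxOf (fconj f) p) (hfa : f a = (α : EReal))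
    (hfsa : fconj f as = (αs : EReal)) {x0 : H} {t0 : ℝ} (hx0 : fconj f x0 = (t0 : EReal)) :
    ∀ ε : ℝ, 0 < ε → ∃ z : H, t0 - ε < eVal f p z - 2⁻¹ * ‖z - x0‖ ^ 2 := by
  intro ε hε
  have h3 : fconj (fconj (fconj f)) x0 = fconj f x0 := congrFun (fconj3 f) x0
  -- extract an approximate maximizer u
  have hex : ∃ u : H, ((t0 - ε / 2 : ℝ) : EReal) < ((⟪u, x0⟫ : ℝ) : EReal) - fconj (fconj f) u := by
    by_contra hcon
    push_neg at hcon
    have hsup : fconj (fconj (fconj f)) x0 ≤ ((t0 - ε / 2 : ℝ) : EReal) := iSup_le hcon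
    rw [h3, hx0, EReal.coe_le_coe_iff] at hsup
    linarith
  obtain ⟨u, hu⟩ := hex
  rcases ereal_cases (fconj (fconj f) u) with hF | ⟨β, hF⟩ | hF
  · exact absurd hF (F2_ne_bot hp hfa hfsa u)
  · rw [hF, ← EReal.coe_sub, EReal.coe_lt_coe_iff] at hu
    refine ⟨x0 + u, ?_⟩
    have hyoung := F2_young hp hfa hfsa (x0 + u) u
    rw [hF, EReal.coe_le_coe_iff] at hyoung
    -- ⟪p z, u⟫ - gp ≤ β  where z = x0 + u
    have hkey : ⟪x0 + u, u⟫ - β - 2⁻¹ * ‖u‖ ^ 2 ≤ eVal f p (x0 + u) := by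
      have hsq : (0:ℝ) ≤ ‖u - ((x0 + u) - p (x0 + u))‖ ^ 2 := sq_nonneg _
      have hexp : ‖u - ((x0 + u) - p (x0 + u))‖ ^ 2
          = ‖u‖ ^ 2 - 2 * ⟪u, (x0 + u) - p (x0 + u)⟫ + ‖(x0 + u) - p (x0 + u)‖ ^ 2 :=
        norm_sub_sq_real _ _
      have hin : ⟪u, (x0 + u) - p (x0 + u)⟫ = ⟪u, x0 + u⟫ - ⟪u, p (x0 + u)⟫ :=
        inner_sub_right _ _ _
      have hc1 : ⟪u, x0 + u⟫ = ⟪x0 + u, u⟫ := real_inner_comm _ _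
      have hc2 : ⟪u, p (x0 + u)⟫ = ⟪p (x0 + u), u⟫ := real_inner_comm _ _
      unfold eVal
      linarith
    have hzx : ‖(x0 + u) - x0‖ ^ 2 = ‖u‖ ^ 2 := by rw [add_sub_cancel_left]
    have hiu : ⟪x0 + u, u⟫ = ⟪x0, u⟫ + ‖u‖ ^ 2 := by
      rw [inner_add_left, real_inner_self_eq_norm_sq]
    have hcx : ⟪u, x0⟫ = ⟪x0, u⟫ := real_inner_comm _ _
    rw [hzx]
    linarith
  · rw [hF, EReal.sub_top] at hu
    exact absurd hu (by simp)

end perOmega4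

section pmax

def pMax (T : ℕ → ℝ) : ℕ → ℝ := fun n => Nat.rec (T 0) (fun k ih => max ih (T (k + 1))) n

lemma pMax_zero (T : ℕ → ℝ) : pMax T 0 = T 0 := rfl

lemma pMax_succ (T : ℕ → ℝ) (n : ℕ) : pMax T (n + 1) = max (pMax T n) (T (n + 1)) := rfl

lemma pMax_le {T : ℕ → ℝ} {c : ℝ} (h : ∀ m, T m ≤ c) (n : ℕ) : pMax T n ≤ c := by
  induction n with
  | zero => exact h 0
  | succ k ih => rw [pMax_succ]; exact max_le ih (h (k + 1))

lemma le_pMax {T : ℕ → ℝ} (n : ℕ) : T n ≤ pMax T n := by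
  cases n with
  | zero => exact le_rfl
  | succ k => rw [pMax_succ]; exact le_max_right _ _

lemma pMax_mono {T : ℕ → ℝ} : Monotone (pMax T) := by
  refine monotone_nat_of_le_succ fun n => ?_
  rw [pMax_succ]; exact le_max_left _ _

lemma tendsto_pMax {T : ℕ → ℝ} {c : ℝ} (hub : ∀ m, T m ≤ c)
    (hap : ∀ ε : ℝ, 0 < ε → ∃ m, c - ε < T m) :
    Filter.Tendsto (pMax T) Filter.atTop (𝓝 c) := by
  rw [Metric.tendsto_atTop]
  intro ε hε
  obtain ⟨m, hm⟩ := hap ε hε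
  refine ⟨m, fun n hn => ?_⟩
  have h1 : pMax T n ≤ c := pMax_le hub n
  have h2 : T m ≤ pMax T n := le_trans (le_pMax m) (pMax_mono hn)
  rw [Real.dist_eq, abs_sub_comm, abs_of_nonneg (by linarith)]
  linarith

variable {Ω : Type*} [MeasurableSpace Ω]

lemma measurable_pMax {T : ℕ → Ω → ℝ} (h : ∀ m, Measurable (T m)) (n : ℕ) :
    Measurable fun ω => pMax (fun m => T m ω) n := by
  induction n with
  | zero => exact h 0
  | succ k ih =>
    simp only [pMax_succ]
    exact Measurable.max ih (h (k + 1))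

lemma measurable_of_partial_sup {T : ℕ → Ω → ℝ} (hT : ∀ m, Measurable (T m)) {c : Ω → ℝ}
    (hub : ∀ ω m, T m ω ≤ c ω) (hap : ∀ ω, ∀ ε : ℝ, 0 < ε → ∃ m, c ω - ε < T m ω) :
    Measurable c := by
  refine measurable_of_tendsto_metrizable (f := fun n ω => pMax (fun m => T m ω) n)
    (fun n => measurable_pMax hT n) ?_
  rw [tendsto_pi_nhds]
  exact fun ω => tendsto_pMax (hub ω) (hap ω)

lemma aemeasurable_of_partial_sup {μ : Measure Ω} {T : ℕ → Ω → ℝ}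
    (hT : ∀ m, AEMeasurable (T m) μ) {c : Ω → ℝ}
    (hub : ∀ ω m, T m ω ≤ c ω) (hap : ∀ ω, ∀ ε : ℝ, 0 < ε → ∃ m, c ω - ε < T m ω) :
    AEMeasurable c μ := by
  refine aemeasurable_of_tendsto_metrizable_ae' (f := fun n ω => pMax (fun m => T m ω) n)
    (fun n => ?_) ?_
  · induction n with
    | zero => exact hT 0
    | succ k ih =>
      simp only [pMax_succ]
      exact AEMeasurable.max ih (hT (k + 1))
  · exact Filter.Eventually.of_forall fun ω => tendsto_pMax (hub ω) (hap ω)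

end pmax

section vecmeas

variable {Ω : Type*} [MeasurableSpace Ω]
variable {X : Type*} [NormedAddCommGroup X] [InnerProductSpace ℝ X]
  [SecondCountableTopology X] [MeasurableSpace X] [BorelSpace X]

lemma measurable_norm_sq_of_inner {F : Ω → X}
    (h : ∀ x : X, Measurable fun ω => (⟪F ω, x⟫ : ℝ)) :
    Measurable fun ω => ‖F ω‖ ^ 2 := by
  rcases isEmpty_or_nonempty X with hX | hX
  · have : ∀ ω, ‖F ω‖ ^ 2 = 0 := fun ω => (IsEmpty.false (F ω)).elim
    simp only [this]; exact measurable_const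
  obtain ⟨d, hd⟩ := TopologicalSpace.exists_dense_seq X
  refine measurable_of_partial_sup (T := fun m ω => 2 * ⟪F ω, d m⟫ - ‖d m‖ ^ 2)
    (fun m => ((h (d m)).const_mul 2).sub measurable_const) ?_ ?_
  · intro ω m
    show 2 * ⟪F ω, d m⟫ - ‖d m‖ ^ 2 ≤ ‖F ω‖ ^ 2
    have h0 : (0:ℝ) ≤ ‖F ω - d m‖ ^ 2 := sq_nonneg _
    have he : ‖F ω - d m‖ ^ 2 = ‖F ω‖ ^ 2 - 2 * ⟪F ω, d m⟫ + ‖d m‖ ^ 2 := norm_sub_sq_real _ _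
    linarith
  · intro ω ε hε
    have hcont : Continuous fun y : X => 2 * ⟪F ω, y⟫ - ‖y‖ ^ 2 := by
      have h1 : Continuous fun y : X => (⟪F ω, y⟫ : ℝ) := continuous_const.inner continuous_id
      continuity
    have hval : 2 * ⟪F ω, F ω⟫ - ‖F ω‖ ^ 2 = ‖F ω‖ ^ 2 := by
      rw [real_inner_self_eq_norm_sq]; ring
    have hopen : IsOpen {y : X | ‖F ω‖ ^ 2 - ε < 2 * ⟪F ω, y⟫ - ‖y‖ ^ 2} :=
      isOpen_lt continuous_const hcont
    have hmem : F ω ∈ {y : X | ‖F ω‖ ^ 2 - ε < 2 * ⟪F ω, y⟫ - ‖y‖ ^ 2} := by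
      simp only [Set.mem_setOf_eq, hval]; linarith
    obtain ⟨m, hm⟩ := hd.exists_mem_open hopen ⟨_, hmem⟩
    exact ⟨m, hm⟩

lemma measurable_of_inner {F : Ω → X}
    (h : ∀ x : X, Measurable fun ω => (⟪F ω, x⟫ : ℝ)) :
    Measurable F := by
  rcases isEmpty_or_nonempty X with hX | hX
  · exact measurable_of_subsingleton_codomain F
  obtain ⟨d, hd⟩ := TopologicalSpace.exists_dense_seq X
  -- distance to each fixed point is measurable
  have hdist : ∀ x : X, Measurable fun ω => ‖F ω - x‖ ^ 2 := by
    intro x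
    have hx : ∀ y : X, Measurable fun ω => (⟪F ω - x, y⟫ : ℝ) := by
      intro y
      have : (fun ω => (⟪F ω - x, y⟫ : ℝ)) = fun ω => ⟪F ω, y⟫ - ⟪x, y⟫ := by
        funext ω; rw [inner_sub_left]
      rw [this]
      exact (h y).sub measurable_const
    exact measurable_norm_sq_of_inner (F := fun ω => F ω - x) hx
  -- approximate F by the dense sequence, measurably
  have hexist : ∀ n : ℕ, ∀ ω, ∃ m, ‖F ω - d m‖ ^ 2 < (1 / (n + 1) : ℝ) ^ 2 := by
    intro n ω
    have hpos : (0:ℝ) < 1 / (n + 1) := by positivity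
    obtain ⟨m, hm⟩ := Metric.denseRange_iff.mp hd (F ω) _ hpos
    refine ⟨m, ?_⟩
    have h1 : ‖F ω - d m‖ = dist (F ω) (d m) := by rw [dist_eq_norm]
    have h2 : (0:ℝ) ≤ ‖F ω - d m‖ := norm_nonneg _
    rw [h1]
    calc dist (F ω) (d m) ^ 2 < (1 / (n + 1) : ℝ) ^ 2 := by
          nlinarith [dist_nonneg (x := F ω) (y := d m), hm]
      _ = _ := rfl
  set G : ℕ → Ω → X := fun n ω => d (Nat.find (hexist n ω)) with hG
  have hGmeas : ∀ n, Measurable (G n) := by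
    intro n
    have hfind : Measurable fun ω => Nat.find (hexist n ω) :=
      measurable_find _ fun m => (measurableSet_lt (hdist (d m)) measurable_const)
    exact (measurable_from_top (f := d)).comp hfind
  refine measurable_of_tendsto_metrizable hGmeas ?_
  rw [tendsto_pi_nhds]
  intro ω
  rw [tendsto_iff_dist_tendsto_zero]
  refine squeeze_zero_norm' (a := fun n : ℕ => 1 / ((n : ℝ) + 1)) ?_ ?_
  · refine Filter.Eventually.of_forall fun n => ?_
    have hspec := Nat.find_spec (hexist n ω)
    have h1 : dist (G n ω) (F ω) = ‖F ω - d (Nat.find (hexist n ω))‖ := by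
      rw [dist_comm, dist_eq_norm]
    have hpos : (0:ℝ) < 1 / (n + 1) := by positivity
    rw [Real.norm_eq_abs, abs_of_nonneg dist_nonneg, h1]
    nlinarith [norm_nonneg (F ω - d (Nat.find (hexist n ω))), hspec]
  · exact tendsto_one_div_add_atTop_nhds_zero_nat

end vecmeas

section omegaMeas

variable {Ω : Type*} [MeasurableSpace Ω] {μ : Measure Ω}
variable {H : Type*} [NormedAddCommGroup H] [InnerProductSpace ℝ H]
  [SecondCountableTopology H] [MeasurableSpace H] [BorelSpace H]
variable {f : Ω → H → EReal} {p : Ω → H → H} {a as : Ω → H} {α αs : Ω → ℝ}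

lemma meas_env_diff (hp : ∀ ω, IsProxOf (fconj (f ω)) (p ω))
    (hfa : ∀ ω, f ω (a ω) = (α ω : EReal)) (hfsa : ∀ ω, fconj (f ω) (as ω) = (αs ω : EReal))
    (hpmeas : ∀ xs : Ω → H, Measurable xs → Measurable fun ω => p ω (xs ω))
    {xs : Ω → H} (hxs : Measurable xs) :
    Measurable fun ω => eVal (f ω) (p ω) (xs ω) - eVal (f ω) (p ω) 0 := by
  refine measurable_of_tendsto_metrizable
    (f := fun n ω => ∑ k ∈ Finset.range n,
      (n : ℝ)⁻¹ * ⟪((k : ℝ) / n) • xs ω - p ω (((k : ℝ) / n) • xs ω), xs ω⟫)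
    (fun n => ?_) ?_
  · refine Finset.measurable_sum _ fun k _ => ?_
    refine Measurable.const_mul ?_ _
    exact ((hxs.const_smul (((k : ℝ) / n))).sub
      (hpmeas _ (hxs.const_smul (((k : ℝ) / n))))).inner hxs
  · rw [tendsto_pi_nhds]
    exact fun ω => env_tendsto (hp ω) (hfa ω) (hfsa ω) (xs ω)

lemma aemeas_env_zero (hp : ∀ ω, IsProxOf (fconj (f ω)) (p ω))
    (hfa : ∀ ω, f ω (a ω) = (α ω : EReal)) (hfsa : ∀ ω, fconj (f ω) (as ω) = (αs ω : EReal))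
    (hpmeas : ∀ xs : Ω → H, Measurable xs → Measurable fun ω => p ω (xs ω))
    (hasmeas : Measurable as) (hαs : AEMeasurable αs μ) :
    AEMeasurable (fun ω => eVal (f ω) (p ω) 0) μ := by
  have : Nonempty H := ⟨0⟩
  obtain ⟨d, hd⟩ := TopologicalSpace.exists_dense_seq H
  have hc : AEMeasurable (fun ω => αs ω - eVal (f ω) (p ω) 0) μ := by
    refine aemeasurable_of_partial_sup
      (T := fun m ω => (eVal (f ω) (p ω) (d m) - eVal (f ω) (p ω) 0)
        - 2⁻¹ * ‖d m - as ω‖ ^ 2) (fun m => ?_) ?_ ?_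
    · refine AEMeasurable.sub ?_ ?_
      · exact (meas_env_diff hp hfa hfsa hpmeas measurable_const).aemeasurable
      · exact (((measurable_const.sub hasmeas).norm.pow measurable_const).const_mul _).aemeasurable
    · intro ω m
      have := env_sup_ub (hp ω) (hfa ω) (hfsa ω) (hfsa ω) (d m)
      linarith
    · intro ω ε hε
      obtain ⟨z, hz⟩ := env_sup_approx (hp ω) (hfa ω) (hfsa ω) (hfsa ω) (ε / 2) (by linarith)
      have hcont : Continuous fun y : H => eVal (f ω) (p ω) y - 2⁻¹ * ‖y - as ω‖ ^ 2 := by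
        have h1 := env_cont (hp ω) (hfa ω) (hfsa ω)
        have h2 : Continuous fun y : H => 2⁻¹ * ‖y - as ω‖ ^ 2 := by continuity
        exact h1.sub h2
      have hopen : IsOpen {y : H |
          αs ω - ε / 2 < eVal (f ω) (p ω) y - 2⁻¹ * ‖y - as ω‖ ^ 2} :=
        isOpen_lt continuous_const hcont
      obtain ⟨m, hm⟩ := hd.exists_mem_open hopen ⟨z, hz⟩
      refine ⟨m, ?_⟩
      simp only [Set.mem_setOf_eq] at hm
      linarith
  have heq : (fun ω => eVal (f ω) (p ω) 0)
      = fun ω => αs ω - (αs ω - eVal (f ω) (p ω) 0) := by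
    funext ω; ring
  rw [heq]
  exact hαs.sub hc

lemma aemeas_env (hp : ∀ ω, IsProxOf (fconj (f ω)) (p ω))
    (hfa : ∀ ω, f ω (a ω) = (α ω : EReal)) (hfsa : ∀ ω, fconj (f ω) (as ω) = (αs ω : EReal))
    (hpmeas : ∀ xs : Ω → H, Measurable xs → Measurable fun ω => p ω (xs ω))
    (hasmeas : Measurable as) (hαs : AEMeasurable αs μ)
    {xs : Ω → H} (hxs : Measurable xs) :
    AEMeasurable (fun ω => eVal (f ω) (p ω) (xs ω)) μ := by
  have heq : (fun ω => eVal (f ω) (p ω) (xs ω))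
      = fun ω => (eVal (f ω) (p ω) 0) + (eVal (f ω) (p ω) (xs ω) - eVal (f ω) (p ω) 0) := by
    funext ω; ring
  rw [heq]
  exact (aemeas_env_zero hp hfa hfsa hpmeas hasmeas hαs).add
    (meas_env_diff hp hfa hfsa hpmeas hxs).aemeasurable

end omegaMeas

section omegaInt

variable {Ω : Type*} [MeasurableSpace Ω] {μ : Measure Ω}
variable {X : Type*} [NormedAddCommGroup X] [InnerProductSpace ℝ X] [CompleteSpace X]
  [SecondCountableTopology X] [MeasurableSpace X] [BorelSpace X]
variable {H : Type*} [NormedAddCommGroup H] [InnerProductSpace ℝ H] [CompleteSpace H]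
  [SecondCountableTopology H] [MeasurableSpace H] [BorelSpace H]
variable {f : Ω → H → EReal} {p : Ω → H → H} {a as : Ω → H} {α αs : Ω → ℝ}
variable {L : Ω → X →L[ℝ] H}

lemma opnorm_sq_bound (L₀ : X →L[ℝ] H) (w : X) : ‖L₀ w‖ ^ 2 ≤ ‖L₀‖ ^ 2 * ‖w‖ ^ 2 := by
  have h := L₀.le_opNorm w
  nlinarith [norm_nonneg (L₀ w), norm_nonneg L₀, norm_nonneg w]

lemma integrable_env (hp : ∀ ω, IsProxOf (fconj (f ω)) (p ω))
    (hfa : ∀ ω, f ω (a ω) = (α ω : EReal)) (hfsa : ∀ ω, fconj (f ω) (as ω) = (αs ω : EReal))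
    (hpmeas : ∀ xs : Ω → H, Measurable xs → Measurable fun ω => p ω (xs ω))
    (hasmeas : Measurable as) (hαi : Integrable α μ) (hαsi : Integrable αs μ)
    (ha2 : Integrable (fun ω => ‖a ω‖ ^ 2) μ) (has2 : Integrable (fun ω => ‖as ω‖ ^ 2) μ)
    (hLmeas : ∀ ξ : X, Measurable fun ω => L ω ξ)
    (hLint : Integrable (fun ω => ‖L ω‖ ^ 2) μ) (η : X) :
    Integrable (fun ω => eVal (f ω) (p ω) (L ω η)) μ := by
  have hmeas := aemeas_env hp hfa hfsa hpmeas hasmeas hαsi.aemeasurable (hLmeas η)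
  refine Integrable.mono'
    (g := fun ω => |α ω| + |αs ω| + ‖a ω‖ ^ 2 + ‖as ω‖ ^ 2 + ‖L ω‖ ^ 2 * ‖η‖ ^ 2)
    ((((hαi.abs.add hαsi.abs).add ha2).add has2).add (hLint.mul_const _))
    hmeas.aestronglyMeasurable ?_
  refine Filter.Eventually.of_forall fun ω => ?_
  have hub := env_le (hp ω) (hfa ω) (hfsa ω) (L ω η)
  have hlb := env_ge (hp ω) (hfa ω) (hfsa ω) (L ω η)
  have hz2 : ‖L ω η‖ ^ 2 ≤ ‖L ω‖ ^ 2 * ‖η‖ ^ 2 := opnorm_sq_bound _ _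
  have hzas : ‖L ω η - as ω‖ ^ 2 ≤ 2 * ‖L ω η‖ ^ 2 + 2 * ‖as ω‖ ^ 2 := by
    nlinarith [norm_sub_le (L ω η) (as ω), norm_nonneg (L ω η), norm_nonneg (as ω),
      sq_nonneg (‖L ω η‖ - ‖as ω‖), norm_nonneg (L ω η - as ω)]
  have hinner : -(2⁻¹ * ‖a ω‖ ^ 2 + 2⁻¹ * ‖L ω η‖ ^ 2) ≤ ⟪a ω, L ω η⟫ := by
    have h1 := neg_le_of_abs_le (abs_real_inner_le_norm (a ω) (L ω η))
    nlinarith [sq_nonneg (‖a ω‖ - ‖L ω η‖), norm_nonneg (a ω), norm_nonneg (L ω η)]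
  rw [Real.norm_eq_abs, abs_le]
  constructor
  · have h1 : -(|α ω| + ‖a ω‖ ^ 2 + ‖L ω η‖ ^ 2) ≤ eVal (f ω) (p ω) (L ω η) := by
      have := abs_nonneg (α ω); have := le_abs_self (α ω); have := neg_abs_le (α ω)
      nlinarith [sq_nonneg (‖a ω‖)]
    have := abs_nonneg (αs ω)
    nlinarith [sq_nonneg ‖as ω‖, norm_nonneg (as ω)]
  · have := le_abs_self (αs ω)
    have := abs_nonneg (α ω)
    nlinarith

lemma prox_dist_dom (hp : ∀ ω, IsProxOf (fconj (f ω)) (p ω))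
    (hfa : ∀ ω, f ω (a ω) = (α ω : EReal)) (hfsa : ∀ ω, fconj (f ω) (as ω) = (αs ω : EReal))
    (ξ : X) (ω : Ω) :
    ‖L ω ξ - p ω (L ω ξ)‖ ^ 2
      ≤ 4 * |αs ω| + 4 * |α ω| + 6 * ‖a ω‖ ^ 2 + 4 * ‖as ω‖ ^ 2 + 6 * (‖L ω‖ ^ 2 * ‖ξ‖ ^ 2) := by
  have h := dist_prox_sq_bound (hp ω) (hfa ω) (hfsa ω) (L ω ξ)
  have hz2 : ‖L ω ξ‖ ^ 2 ≤ ‖L ω‖ ^ 2 * ‖ξ‖ ^ 2 := opnorm_sq_bound _ _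
  linarith

lemma meas_adj (hpmeas : ∀ xs : Ω → H, Measurable xs → Measurable fun ω => p ω (xs ω))
    (hLmeas : ∀ ξ : X, Measurable fun ω => L ω ξ) (ξ : X) :
    Measurable fun ω => (L ω).adjoint (L ω ξ - p ω (L ω ξ)) := by
  refine measurable_of_inner fun x => ?_
  have heq : (fun ω => (⟪(L ω).adjoint (L ω ξ - p ω (L ω ξ)), x⟫ : ℝ))
      = fun ω => ⟪L ω ξ - p ω (L ω ξ), L ω x⟫ := by
    funext ω
    exact ContinuousLinearMap.adjoint_inner_left _ _ _
  rw [heq]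
  exact ((hLmeas ξ).sub (hpmeas _ (hLmeas ξ))).inner (hLmeas x)

lemma norm_adj_le (L₀ : X →L[ℝ] H) (u : H) : ‖L₀.adjoint u‖ ≤ ‖L₀‖ * ‖u‖ := by
  have h := L₀.adjoint.le_opNorm u
  have h2 : ‖L₀.adjoint‖ = ‖L₀‖ := ContinuousLinearMap.adjoint.norm_map L₀
  rwa [h2] at h

lemma integrable_adj (hp : ∀ ω, IsProxOf (fconj (f ω)) (p ω))
    (hfa : ∀ ω, f ω (a ω) = (α ω : EReal)) (hfsa : ∀ ω, fconj (f ω) (as ω) = (αs ω : EReal))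
    (hpmeas : ∀ xs : Ω → H, Measurable xs → Measurable fun ω => p ω (xs ω))
    (hαi : Integrable α μ) (hαsi : Integrable αs μ)
    (ha2 : Integrable (fun ω => ‖a ω‖ ^ 2) μ) (has2 : Integrable (fun ω => ‖as ω‖ ^ 2) μ)
    (hLmeas : ∀ ξ : X, Measurable fun ω => L ω ξ)
    (hLint : Integrable (fun ω => ‖L ω‖ ^ 2) μ) (ξ : X) :
    Integrable (fun ω => (L ω).adjoint (L ω ξ - p ω (L ω ξ))) μ := by
  refine Integrable.mono'
    (g := fun ω => 2⁻¹ * ‖L ω‖ ^ 2 + 2⁻¹ * (4 * |αs ω| + 4 * |α ω| + 6 * ‖a ω‖ ^ 2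
      + 4 * ‖as ω‖ ^ 2 + 6 * (‖L ω‖ ^ 2 * ‖ξ‖ ^ 2)))
    ?_ (meas_adj hpmeas hLmeas ξ).aestronglyMeasurable ?_
  · refine (hLint.const_mul _).add (Integrable.const_mul ?_ _)
    exact ((((hαsi.abs.const_mul 4).add (hαi.abs.const_mul 4)).add
      (ha2.const_mul 6)).add (has2.const_mul 4)).add ((hLint.mul_const _).const_mul 6)
  · refine Filter.Eventually.of_forall fun ω => ?_
    have h1 := norm_adj_le (L ω) (L ω ξ - p ω (L ω ξ))
    have h2 := prox_dist_dom (L := L) hp hfa hfsa ξ ω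
    have h3 : ‖L ω‖ * ‖L ω ξ - p ω (L ω ξ)‖
        ≤ 2⁻¹ * ‖L ω‖ ^ 2 + 2⁻¹ * ‖L ω ξ - p ω (L ω ξ)‖ ^ 2 := by
      nlinarith [sq_nonneg (‖L ω‖ - ‖L ω ξ - p ω (L ω ξ)‖)]
    calc ‖(L ω).adjoint (L ω ξ - p ω (L ω ξ))‖ ≤ ‖L ω‖ * ‖L ω ξ - p ω (L ω ξ)‖ := h1
      _ ≤ _ := by linarith

lemma integrable_inner_adj (hp : ∀ ω, IsProxOf (fconj (f ω)) (p ω))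
    (hfa : ∀ ω, f ω (a ω) = (α ω : EReal)) (hfsa : ∀ ω, fconj (f ω) (as ω) = (αs ω : EReal))
    (hpmeas : ∀ xs : Ω → H, Measurable xs → Measurable fun ω => p ω (xs ω))
    (hαi : Integrable α μ) (hαsi : Integrable αs μ)
    (ha2 : Integrable (fun ω => ‖a ω‖ ^ 2) μ) (has2 : Integrable (fun ω => ‖as ω‖ ^ 2) μ)
    (hLmeas : ∀ ξ : X, Measurable fun ω => L ω ξ)
    (hLint : Integrable (fun ω => ‖L ω‖ ^ 2) μ) (ξ v : X) :
    Integrable (fun ω => (⟪L ω ξ - p ω (L ω ξ), L ω v⟫ : ℝ)) μ := by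
  have hint := integrable_adj hp hfa hfsa hpmeas hαi hαsi ha2 has2 hLmeas hLint ξ
  have heq : (fun ω => (⟪L ω ξ - p ω (L ω ξ), L ω v⟫ : ℝ))
      = fun ω => ⟪(L ω).adjoint (L ω ξ - p ω (L ω ξ)), v⟫ := by
    funext ω
    exact (ContinuousLinearMap.adjoint_inner_left _ _ _).symm
  rw [heq]
  refine Integrable.mono' (g := fun ω => ‖(L ω).adjoint (L ω ξ - p ω (L ω ξ))‖ * ‖v‖)
    (hint.norm.mul_const _)
    ((meas_adj hpmeas hLmeas ξ).inner measurable_const).aestronglyMeasurable ?_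
  exact Filter.Eventually.of_forall fun ω => by
    rw [Real.norm_eq_abs]; exact abs_real_inner_le_norm _ _

lemma integrable_opsq (hLmeas : ∀ ξ : X, Measurable fun ω => L ω ξ)
    (hLint : Integrable (fun ω => ‖L ω‖ ^ 2) μ) (w : X) :
    Integrable (fun ω => ‖L ω w‖ ^ 2) μ := by
  refine Integrable.mono' (g := fun ω => ‖L ω‖ ^ 2 * ‖w‖ ^ 2) (hLint.mul_const _)
    ((hLmeas w).norm.pow measurable_const).aestronglyMeasurable ?_
  exact Filter.Eventually.of_forall fun ω => by
    rw [Real.norm_eq_abs, abs_of_nonneg (sq_nonneg _)]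
    exact opnorm_sq_bound _ _

end omegaInt

section master

variable {Ω : Type*} [MeasurableSpace Ω] {μ : Measure Ω}
variable {X : Type*} [NormedAddCommGroup X] [InnerProductSpace ℝ X] [CompleteSpace X]
  [SecondCountableTopology X] [MeasurableSpace X] [BorelSpace X]
variable {H : Type*} [NormedAddCommGroup H] [InnerProductSpace ℝ H] [CompleteSpace H]
  [SecondCountableTopology H] [MeasurableSpace H] [BorelSpace H]

theorem master (f : Ω → H → EReal) (p q : Ω → H → H) (a as : Ω → H) (α αs : Ω → ℝ)
    (hp : ∀ ω, IsProxOf (fconj (f ω)) (p ω))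
    (hq : ∀ ω, IsProxOf (fconj (fconj (f ω))) (q ω))
    (hfa : ∀ ω, f ω (a ω) = (α ω : EReal)) (hfsa : ∀ ω, fconj (f ω) (as ω) = (αs ω : EReal))
    (hpmeas : ∀ xs : Ω → H, Measurable xs → Measurable fun ω => p ω (xs ω))
    (hasmeas : Measurable as)
    (hαi : Integrable α μ) (hαsi : Integrable αs μ)
    (ha2 : Integrable (fun ω => ‖a ω‖ ^ 2) μ) (has2 : Integrable (fun ω => ‖as ω‖ ^ 2) μ)
    (L : Ω → X →L[ℝ] H)
    (hLmeas : ∀ ξ : X, Measurable fun ω => L ω ξ)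
    (hLint : Integrable (fun ω => ‖L ω‖ ^ 2) μ)
    (hL1 : (∫ ω, ‖L ω‖ ^ 2 ∂μ) ≤ 1) :
    IsProxOf (rmiFun μ L f) (fun ξ : X => ∫ ω, (L ω).adjoint (q ω (L ω ξ)) ∂μ) ∧
    IsProxOf (fconj (rmiFun μ L f))
      (fun ξ : X => ξ - ∫ ω, (L ω).adjoint (q ω (L ω ξ)) ∂μ) := by
  classical
  set Phi : X → ℝ := fun η => ∫ ω, eVal (f ω) (p ω) (L ω η) ∂μ with hPhi
  set R : X → X := fun ξ => ∫ ω, (L ω).adjoint (L ω ξ - p ω (L ω ξ)) ∂μ with hR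
  -- the stated prox maps agree with R
  have hq_eq : ∀ ω z, q ω z = z - p ω z := fun ω z =>
    prox_moreau (hp ω) (hfa ω) (hfsa ω) (hq ω) z
  have hqi : ∀ ξ : X, (∫ ω, (L ω).adjoint (q ω (L ω ξ)) ∂μ) = R ξ := by
    intro ξ
    simp only [hR]
    congr 1
    funext ω
    rw [hq_eq]
  -- rewrite rmiFun via Phi
  have hfun : (fun η : X => ((∫ ω, (morEnv (fconj (f ω)) (L ω η)).toReal ∂μ : ℝ) : EReal))
      = fun η => ((Phi η : ℝ) : EReal) := by
    funext η
    have hpt : ∀ ω : Ω, (morEnv (fconj (f ω)) (L ω η)).toReal = eVal (f ω) (p ω) (L ω η) := by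
      intro ω
      rw [env_eq (hp ω) (hfa ω) (hfsa ω), EReal.toReal_coe]
    simp only [hPhi, hpt]
  have hrmi : rmiFun μ L f
      = fun ξ => fconj (fun η => ((Phi η : ℝ) : EReal)) ξ - ((2⁻¹ * ‖ξ‖ ^ 2 : ℝ) : EReal) := by
    unfold rmiFun
    rw [hfun]
  set Phihat : X → EReal := fun η => ((Phi η : ℝ) : EReal) with hPhihat
  -- integral swap
  have hswap : ∀ ξ v : X, (∫ ω, (⟪L ω ξ - p ω (L ω ξ), L ω v⟫ : ℝ) ∂μ) = ⟪R ξ, v⟫ := by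
    intro ξ v
    have hint := integrable_adj (L := L) hp hfa hfsa hpmeas hαi hαsi ha2 has2 hLmeas hLint ξ
    have h1 : (fun ω => (⟪L ω ξ - p ω (L ω ξ), L ω v⟫ : ℝ))
        = fun ω => ⟪v, (L ω).adjoint (L ω ξ - p ω (L ω ξ))⟫ := by
      funext ω
      rw [ContinuousLinearMap.adjoint_inner_right]
      exact real_inner_comm _ _
    rw [h1, integral_inner hint v]
    exact real_inner_comm _ _
  -- subgradient inequality
  have key1 : ∀ ξ η : X, Phi ξ + ⟪R ξ, η - ξ⟫ ≤ Phi η := by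
    intro ξ η
    have hpt : ∀ ω, eVal (f ω) (p ω) (L ω ξ)
        + (⟪L ω ξ - p ω (L ω ξ), L ω (η - ξ)⟫ : ℝ) ≤ eVal (f ω) (p ω) (L ω η) := by
      intro ω
      have := env_lb (hp ω) (hfa ω) (hfsa ω) (L ω ξ) (L ω η)
      rwa [← map_sub (L ω) η ξ] at this
    have hint1 : Integrable (fun ω => eVal (f ω) (p ω) (L ω ξ)
        + (⟪L ω ξ - p ω (L ω ξ), L ω (η - ξ)⟫ : ℝ)) μ :=
      (integrable_env (L := L) hp hfa hfsa hpmeas hasmeas hαi hαsi ha2 has2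
        hLmeas hLint ξ).add
        (integrable_inner_adj (L := L) hp hfa hfsa hpmeas hαi hαsi ha2 has2 hLmeas hLint ξ (η - ξ))
    have hint2 := integrable_env (L := L) hp hfa hfsa hpmeas hasmeas hαi hαsi ha2 has2
      hLmeas hLint η
    have hmono := integral_mono hint1 hint2 hpt
    rw [integral_add (integrable_env (L := L) hp hfa hfsa hpmeas hasmeas hαi hαsi ha2 has2
      hLmeas hLint ξ)
      (integrable_inner_adj (L := L) hp hfa hfsa hpmeas hαi hαsi ha2 has2 hLmeas hLint ξ (η - ξ)),
      hswap ξ (η - ξ)] at hmono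
    exact hmono
  -- smoothness inequality
  have key2 : ∀ ξ η : X, Phi η ≤ Phi ξ + ⟪R ξ, η - ξ⟫ + 2⁻¹ * ‖η - ξ‖ ^ 2 := by
    intro ξ η
    have hpt : ∀ ω, eVal (f ω) (p ω) (L ω η) ≤ eVal (f ω) (p ω) (L ω ξ)
        + (⟪L ω ξ - p ω (L ω ξ), L ω (η - ξ)⟫ : ℝ) + 2⁻¹ * ‖L ω (η - ξ)‖ ^ 2 := by
      intro ω
      have := env_ub (hp ω) (hfa ω) (hfsa ω) (L ω ξ) (L ω η)
      rwa [← map_sub (L ω) η ξ] at this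
    have hie := integrable_env (L := L) hp hfa hfsa hpmeas hasmeas hαi hαsi ha2 has2
      hLmeas hLint ξ
    have hii := integrable_inner_adj (L := L) hp hfa hfsa hpmeas hαi hαsi ha2 has2 hLmeas
      hLint ξ (η - ξ)
    have hei : Integrable (fun ω => eVal (f ω) (p ω) (L ω ξ)
        + (⟪L ω ξ - p ω (L ω ξ), L ω (η - ξ)⟫ : ℝ)) μ := hie.add hii
    have hio : Integrable (fun ω => 2⁻¹ * ‖L ω (η - ξ)‖ ^ 2) μ :=
      (integrable_opsq (L := L) hLmeas hLint (η - ξ)).const_mul (2⁻¹ : ℝ)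
    have heio : Integrable (fun ω => (eVal (f ω) (p ω) (L ω ξ)
        + (⟪L ω ξ - p ω (L ω ξ), L ω (η - ξ)⟫ : ℝ)) + 2⁻¹ * ‖L ω (η - ξ)‖ ^ 2) μ :=
      hei.add hio
    have hint2 := integrable_env (L := L) hp hfa hfsa hpmeas hasmeas hαi hαsi ha2 has2
      hLmeas hLint η
    have hmono := integral_mono hint2 heio hpt
    rw [integral_add hei hio, integral_add hie hii, hswap ξ (η - ξ),
      integral_const_mul] at hmono
    have hL2 : ∫ ω, ‖L ω (η - ξ)‖ ^ 2 ∂μ ≤ ‖η - ξ‖ ^ 2 := by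
      calc ∫ ω, ‖L ω (η - ξ)‖ ^ 2 ∂μ ≤ ∫ ω, ‖L ω‖ ^ 2 * ‖η - ξ‖ ^ 2 ∂μ :=
            integral_mono (integrable_opsq (L := L) hLmeas hLint (η - ξ))
              (hLint.mul_const _) (fun ω => opnorm_sq_bound _ _)
        _ = (∫ ω, ‖L ω‖ ^ 2 ∂μ) * ‖η - ξ‖ ^ 2 := integral_mul_const _ _
        _ ≤ 1 * ‖η - ξ‖ ^ 2 := mul_le_mul_of_nonneg_right hL1 (sq_nonneg _)
        _ = ‖η - ξ‖ ^ 2 := one_mul _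
    linarith
  -- Fenchel equality at R ξ
  have key3 : ∀ ξ : X, fconj Phihat (R ξ) = ((⟪ξ, R ξ⟫ - Phi ξ : ℝ) : EReal) := by
    intro ξ
    refine le_antisymm ?_ ?_
    · refine iSup_le fun η => ?_
      show ((⟪η, R ξ⟫ : ℝ) : EReal) - ((Phi η : ℝ) : EReal) ≤ _
      rw [← EReal.coe_sub, EReal.coe_le_coe_iff]
      have h1 := key1 ξ η
      have h2 : ⟪R ξ, η - ξ⟫ = ⟪R ξ, η⟫ - ⟪R ξ, ξ⟫ := inner_sub_right _ _ _
      have h3 : ⟪η, R ξ⟫ = ⟪R ξ, η⟫ := real_inner_comm _ _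
      have h4 : ⟪ξ, R ξ⟫ = ⟪R ξ, ξ⟫ := real_inner_comm _ _
      linarith
    · have := le_fconj Phihat ξ (R ξ)
      rwa [hPhihat, ← EReal.coe_sub] at this
  -- strong convexity of the conjugate
  have key4 : ∀ ξ y : X,
      ((⟪ξ, y⟫ - Phi ξ + 2⁻¹ * ‖y - R ξ‖ ^ 2 : ℝ) : EReal) ≤ fconj Phihat y := by
    intro ξ y
    have hterm := le_fconj Phihat (ξ + (y - R ξ)) y
    rw [hPhihat, ← EReal.coe_sub] at hterm
    refine le_trans ?_ hterm
    rw [EReal.coe_le_coe_iff]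
    have h1 := key2 ξ (ξ + (y - R ξ))
    have h2 : ξ + (y - R ξ) - ξ = y - R ξ := by module
    rw [h2] at h1
    have h3 : ⟪ξ + (y - R ξ), y⟫ = ⟪ξ, y⟫ + ⟪y - R ξ, y⟫ := inner_add_left _ _ _
    have h4 : ⟪R ξ, y - R ξ⟫ = ⟪y - R ξ, R ξ⟫ := real_inner_comm _ _
    have h5 : ⟪y - R ξ, y⟫ - ⟪y - R ξ, R ξ⟫ = ‖y - R ξ‖ ^ 2 := by
      rw [← inner_sub_right, ← real_inner_self_eq_norm_sq]
    linarith
  have hPhibot : ∀ y : X, ((⟪(0 : X), y⟫ - Phi 0 : ℝ) : EReal) ≤ fconj Phihat y := by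
    intro y
    have := le_fconj Phihat 0 y
    rwa [hPhihat, ← EReal.coe_sub] at this
  rw [hrmi]
  constructor
  · -- part (a)
    intro x y
    dsimp only
    rw [hqi x]
    have hxRx : fconj Phihat (R x) - ((2⁻¹ * ‖R x‖ ^ 2 : ℝ) : EReal)
        + ((2⁻¹ * ‖x - R x‖ ^ 2 : ℝ) : EReal) = ((2⁻¹ * ‖x‖ ^ 2 - Phi x : ℝ) : EReal) := by
      rw [key3, ← EReal.coe_sub, ← EReal.coe_add]
      congr 1
      rw [norm_sub_sq_real]
      ring
    rw [hxRx]
    have hy := le_fconj Phihat x y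
    rw [hPhihat, ← EReal.coe_sub] at hy
    calc ((2⁻¹ * ‖x‖ ^ 2 - Phi x : ℝ) : EReal)
        ≤ ((⟪x, y⟫ - Phi x - 2⁻¹ * ‖y‖ ^ 2 + 2⁻¹ * ‖x - y‖ ^ 2 : ℝ) : EReal) := by
          rw [EReal.coe_le_coe_iff, norm_sub_sq_real]
          linarith
      _ = ((⟪x, y⟫ - Phi x : ℝ) : EReal) - ((2⁻¹ * ‖y‖ ^ 2 : ℝ) : EReal)
            + ((2⁻¹ * ‖x - y‖ ^ 2 : ℝ) : EReal) := by
          rw [← EReal.coe_sub, ← EReal.coe_add]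
      _ ≤ fconj Phihat y - ((2⁻¹ * ‖y‖ ^ 2 : ℝ) : EReal)
            + ((2⁻¹ * ‖x - y‖ ^ 2 : ℝ) : EReal) :=
          add_le_add (EReal.sub_le_sub hy le_rfl) le_rfl
  · -- part (b)
    intro x y
    dsimp only
    rw [hqi x]
    set M : X → EReal := fun ξ => fconj Phihat ξ - ((2⁻¹ * ‖ξ‖ ^ 2 : ℝ) : EReal) with hM
    have hsub : x - (x - R x) = R x := by module
    rw [hsub]
    -- upper bound on fconj M (x - R x)
    have hub : fconj M (x - R x) ≤ ((Phi x - 2⁻¹ * ‖R x‖ ^ 2 : ℝ) : EReal) := by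
      refine iSup_le fun y' => ?_
      rcases ereal_cases (fconj Phihat y') with hb | ⟨t, hb⟩ | hb
      · exfalso
        have := hPhibot y'
        rw [hb] at this
        exact absurd (le_bot_iff.mp this) (EReal.coe_ne_bot _)
      · have hM' : M y' = ((t - 2⁻¹ * ‖y'‖ ^ 2 : ℝ) : EReal) := by
          rw [hM]
          dsimp only
          rw [hb, ← EReal.coe_sub]
        rw [hM', ← EReal.coe_sub, EReal.coe_le_coe_iff]
        have h4 := key4 x y'
        rw [hb, EReal.coe_le_coe_iff] at h4
        have h5 : ⟪y', x - R x⟫ = ⟪y', x⟫ - ⟪y', R x⟫ := inner_sub_right _ _ _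
        have h6 : ⟪y', x⟫ = ⟪x, y'⟫ := real_inner_comm _ _
        have h7 : ‖y' - R x‖ ^ 2 = ‖y'‖ ^ 2 - 2 * ⟪y', R x⟫ + ‖R x‖ ^ 2 := norm_sub_sq_real _ _
        linarith
      · have hM' : M y' = ⊤ := by
          rw [hM]
          dsimp only
          rw [hb]
          exact EReal.top_sub_coe _
        rw [hM', EReal.sub_top]
        exact bot_le
    -- lower bound on fconj M u
    have hlb : ∀ u : X,
        ((⟪R x, u⟫ - ⟪x, R x⟫ + Phi x + 2⁻¹ * ‖R x‖ ^ 2 : ℝ) : EReal) ≤ fconj M u := by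
      intro u
      have hterm := le_fconj M (R x) u
      have hMR : M (R x) = ((⟪x, R x⟫ - Phi x - 2⁻¹ * ‖R x‖ ^ 2 : ℝ) : EReal) := by
        rw [hM]
        dsimp only
        rw [key3, ← EReal.coe_sub]
      rw [hMR, ← EReal.coe_sub] at hterm
      refine le_trans (le_of_eq ?_) hterm
      congr 1
      ring
    calc fconj M (x - R x) + ((2⁻¹ * ‖R x‖ ^ 2 : ℝ) : EReal)
        ≤ ((Phi x - 2⁻¹ * ‖R x‖ ^ 2 : ℝ) : EReal) + ((2⁻¹ * ‖R x‖ ^ 2 : ℝ) : EReal) :=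
          add_le_add hub le_rfl
      _ = ((Phi x : ℝ) : EReal) := by rw [← EReal.coe_add]; congr 1; ring
      _ ≤ ((⟪R x, y⟫ - ⟪x, R x⟫ + Phi x + 2⁻¹ * ‖R x‖ ^ 2 : ℝ) : EReal)
            + ((2⁻¹ * ‖x - y‖ ^ 2 : ℝ) : EReal) := by
          rw [← EReal.coe_add, EReal.coe_le_coe_iff]
          have h1 : ‖R x - (x - y)‖ ^ 2
              = ‖R x‖ ^ 2 - 2 * ⟪R x, x - y⟫ + ‖x - y‖ ^ 2 := norm_sub_sq_real _ _
          have h2 : ⟪R x, x - y⟫ = ⟪R x, x⟫ - ⟪R x, y⟫ := inner_sub_right _ _ _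
          have h3 : ⟪R x, x⟫ = ⟪x, R x⟫ := real_inner_comm _ _
          nlinarith [sq_nonneg ‖R x - (x - y)‖, h1]
      _ ≤ fconj M y + ((2⁻¹ * ‖x - y‖ ^ 2 : ℝ) : EReal) :=
          add_le_add (hlb y) le_rfl

end master

section stmtfinal

variable {Ω : Type*} [MeasurableSpace Ω] {μ : Measure Ω}
variable {H : Type*} [NormedAddCommGroup H] [InnerProductSpace ℝ H]
  [SecondCountableTopology H] [MeasurableSpace H] [BorelSpace H]

lemma integrable_norm_sq_of_lintegral {r : Ω → H} (hm : Measurable r)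
    (h : (∫⁻ ω, (‖r ω‖₊ : ℝ≥0∞) ^ 2 ∂μ) < ⊤) : Integrable (fun ω => ‖r ω‖ ^ 2) μ := by
  refine ⟨(hm.norm.pow measurable_const).aestronglyMeasurable, ?_⟩
  rw [hasFiniteIntegral_def]
  have heq : ∀ ω, (‖(‖r ω‖ ^ 2 : ℝ)‖₊ : ℝ≥0∞) = (‖r ω‖₊ : ℝ≥0∞) ^ 2 := by
    intro ω
    rw [show (‖(‖r ω‖ ^ 2 : ℝ)‖₊) = ‖r ω‖₊ ^ 2 from by
      rw [sq, nnnorm_mul, nnnorm_norm, ← sq], ENNReal.coe_pow]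
  calc (∫⁻ ω, (‖(‖r ω‖ ^ 2 : ℝ)‖₊ : ℝ≥0∞) ∂μ) = ∫⁻ ω, (‖r ω‖₊ : ℝ≥0∞) ^ 2 ∂μ := by
        exact lintegral_congr heq
    _ < ⊤ := h

end stmtfinal


/-- Theorem 4.3(ix)-(x): the proximity operators of the integral proximal
mixture and comixture are `prox_{rmi(L_ω,f_ω)} = ξ ↦ ∫ L_ω*(prox_{f_ω**}(L_ω ξ)) dμ` and
`prox_{rcm(L_ω,f_ω)} = ξ ↦ ξ − ∫ L_ω*(prox_{f_ω*}(L_ω ξ)) dμ`. -/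
theorem stmt_15
    {Ω : Type*} [MeasurableSpace Ω] {μ : Measure Ω} [SigmaFinite μ] [μ.IsComplete]
    {X : Type*} [NormedAddCommGroup X] [InnerProductSpace ℝ X] [CompleteSpace X]
    [SecondCountableTopology X] [MeasurableSpace X] [BorelSpace X]
    {H : Type*} [NormedAddCommGroup H] [InnerProductSpace ℝ H] [CompleteSpace H]
    [SecondCountableTopology H] [MeasurableSpace H] [BorelSpace H]
    -- the family of functions `f_ω : H → (−∞, +∞]`, each with a continuous affine minorant
    (f : Ω → H → EReal)
    (hmin : ∀ ω, ∃ (u : H) (c : ℝ), ∀ x : H, ((inner ℝ x u + c : ℝ) : EReal) ≤ f ω x)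
    -- the integrability assumptions on `ω ↦ f_ω(r(ω))` and `ω ↦ f_ω*(r*(ω))`
    (r rs : Ω → H) (hrmeas : Measurable r) (hrsmeas : Measurable rs)
    (hr2 : (∫⁻ ω, (‖r ω‖₊ : ℝ≥0∞) ^ 2 ∂μ) < ⊤) (hrs2 : (∫⁻ ω, (‖rs ω‖₊ : ℝ≥0∞) ^ 2 ∂μ) < ⊤)
    (hfr : ∃ φ : Ω → ℝ, Integrable φ μ ∧ ∀ ω, f ω (r ω) = (φ ω : EReal))
    (hfsr : ∃ ψ : Ω → ℝ, Integrable ψ μ ∧ ∀ ω, fconj (f ω) (rs ω) = (ψ ω : EReal))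
    -- the proximity operators of the conjugates, and their measurability
    (p : Ω → H → H) (hp : ∀ ω, IsProxOf (fconj (f ω)) (p ω))
    (hpmeas : ∀ xs : Ω → H, Measurable xs → Measurable fun ω => p ω (xs ω))
    -- the family of bounded linear operators
    (L : Ω → X →L[ℝ] H)
    (hLmeas : ∀ ξ : X, Measurable fun ω => L ω ξ)
    (hLint : Integrable (fun ω => ‖L ω‖ ^ 2) μ)
    (hL0 : 0 < ∫ ω, ‖L ω‖ ^ 2 ∂μ) (hL1 : (∫ ω, ‖L ω‖ ^ 2 ∂μ) ≤ 1)
    -- the proximity operators of the biconjugates `f_ω** = (f_ω*)*`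
    (q : Ω → H → H) (hq : ∀ ω, IsProxOf (fconj (fconj (f ω))) (q ω)) :
    IsProxOf (rmiFun μ L f) (fun ξ : X => ∫ ω, (L ω).adjoint (q ω (L ω ξ)) ∂μ) ∧
    IsProxOf (rcmFun μ L f) (fun ξ : X => ξ - ∫ ω, (L ω).adjoint (p ω (L ω ξ)) ∂μ) := by
    classical
  obtain ⟨φ, hφi, hφ⟩ := hfr
  obtain ⟨ψ, hψi, hψ⟩ := hfsr
  have hr2' : Integrable (fun ω => ‖r ω‖ ^ 2) μ := integrable_norm_sq_of_lintegral hrmeas hr2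
  have hrs2' : Integrable (fun ω => ‖rs ω‖ ^ 2) μ := integrable_norm_sq_of_lintegral hrsmeas hrs2
  -- part (a): apply the master theorem directly
  have part1 := master f p q r rs φ ψ hp hq hφ hψ hpmeas hrsmeas hφi hψi hr2' hrs2'
    L hLmeas hLint hL1
  refine ⟨part1.1, ?_⟩
  -- part (b): apply the master theorem to the conjugate family
  -- the value of `f**` at `r ω` is real
  have hχr : ∀ ω, fconj (fconj (f ω)) (r ω)
      = (((fconj (fconj (f ω)) (r ω)).toReal : ℝ) : EReal) := by
    intro ω
    have hnb : fconj (fconj (f ω)) (r ω) ≠ ⊥ := fconj_ne_bot (fconj (f ω)) (hψ ω) _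
    have hnt : fconj (fconj (f ω)) (r ω) ≠ ⊤ := by
      intro htop
      have hle := fconj_fconj_le (f ω) (r ω)
      rw [htop, hφ ω] at hle
      exact absurd (top_le_iff.mp hle) (EReal.coe_ne_top _)
    exact (EReal.coe_toReal hnt hnb).symm
  set χ : Ω → ℝ := fun ω => (fconj (fconj (f ω)) (r ω)).toReal with hχdef
  have hχ : ∀ ω, fconj (fconj (f ω)) (r ω) = ((χ ω : ℝ) : EReal) := hχr
  -- bounds on χ
  have hχub : ∀ ω, χ ω ≤ φ ω := by
    intro ω
    have hle := fconj_fconj_le (f ω) (r ω)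
    rw [hχ ω, hφ ω, EReal.coe_le_coe_iff] at hle
    exact hle
  have hχlb : ∀ ω, ⟪rs ω, r ω⟫ - ψ ω ≤ χ ω := by
    intro ω
    have := coe_le_fconj (fconj (f ω)) (hψ ω) (r ω)
    rw [hχ ω, EReal.coe_le_coe_iff] at this
    exact this
  -- measurability of χ via the envelope inversion formula
  have hNH : Nonempty H := ⟨0⟩
  obtain ⟨d, hd⟩ := TopologicalSpace.exists_dense_seq H
  have hχmeas : AEMeasurable χ μ := by
    refine aemeasurable_of_partial_sup
      (T := fun m ω => (2⁻¹ * ‖d m‖ ^ 2 - eVal (f ω) (p ω) (d m))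
        - 2⁻¹ * ‖d m - r ω‖ ^ 2) (fun m => ?_) ?_ ?_
    · refine AEMeasurable.sub (AEMeasurable.sub (aemeasurable_const) ?_) ?_
      · exact aemeas_env hp hφ hψ hpmeas hrsmeas hψi.aemeasurable measurable_const
      · exact (((measurable_const.sub hrmeas).norm.pow measurable_const).const_mul _).aemeasurable
    · intro ω m
      have h1 := env_sup_ub (hq ω) (hψ ω) (hχ ω) (hχ ω) (d m)
      rw [env2_eq (hp ω) (hφ ω) (hψ ω) (hq ω) (d m)] at h1
      linarith
    · intro ω ε hε
      obtain ⟨z, hz⟩ := env_sup_approx (hq ω) (hψ ω) (hχ ω) (hχ ω) (ε / 2) (by linarith)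
      rw [env2_eq (hp ω) (hφ ω) (hψ ω) (hq ω) z] at hz
      have hcont : Continuous fun y : H =>
          (2⁻¹ * ‖y‖ ^ 2 - eVal (f ω) (p ω) y) - 2⁻¹ * ‖y - r ω‖ ^ 2 := by
        have h1 := env_cont (hp ω) (hφ ω) (hψ ω)
        have h2 : Continuous fun y : H => 2⁻¹ * ‖y‖ ^ 2 :=
          continuous_const.mul (continuous_norm.pow 2)
        have h3 : Continuous fun y : H => 2⁻¹ * ‖y - r ω‖ ^ 2 :=
          continuous_const.mul (((continuous_id.sub continuous_const).norm).pow 2)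
        exact (h2.sub h1).sub h3
      have hopen : IsOpen {y : H |
          χ ω - ε / 2 < (2⁻¹ * ‖y‖ ^ 2 - eVal (f ω) (p ω) y) - 2⁻¹ * ‖y - r ω‖ ^ 2} :=
        isOpen_lt continuous_const hcont
      have hzmem : z ∈ {y : H |
          χ ω - ε / 2 < (2⁻¹ * ‖y‖ ^ 2 - eVal (f ω) (p ω) y) - 2⁻¹ * ‖y - r ω‖ ^ 2} := by
        simp only [Set.mem_setOf_eq]; linarith
      obtain ⟨m, hm⟩ := hd.exists_mem_open hopen ⟨z, hzmem⟩
      refine ⟨m, ?_⟩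
      simp only [Set.mem_setOf_eq] at hm
      linarith
  have hχi : Integrable χ μ := by
    refine Integrable.mono' (g := fun ω => |φ ω| + |ψ ω| + 2⁻¹ * ‖r ω‖ ^ 2 + 2⁻¹ * ‖rs ω‖ ^ 2)
      (((hφi.abs.add hψi.abs).add (hr2'.const_mul _)).add (hrs2'.const_mul _))
      hχmeas.aestronglyMeasurable ?_
    refine Filter.Eventually.of_forall fun ω => ?_
    rw [Real.norm_eq_abs, abs_le]
    have h1 := hχub ω
    have h2 := hχlb ω
    have h3 : -(2⁻¹ * ‖rs ω‖ ^ 2 + 2⁻¹ * ‖r ω‖ ^ 2) ≤ ⟪rs ω, r ω⟫ := by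
      have := neg_le_of_abs_le (abs_real_inner_le_norm (rs ω) (r ω))
      nlinarith [sq_nonneg (‖rs ω‖ - ‖r ω‖), norm_nonneg (rs ω), norm_nonneg (r ω)]
    constructor
    · have hψa := le_abs_self (ψ ω)
      have hφa := abs_nonneg (φ ω)
      linarith
    · have hφa := le_abs_self (φ ω)
      have hψa := abs_nonneg (ψ ω)
      have hn1 := sq_nonneg ‖r ω‖
      have hn2 := sq_nonneg ‖rs ω‖
      linarith
  -- measurability of the prox of the conjugate family
  have hqmeas : ∀ xs : Ω → H, Measurable xs → Measurable fun ω => q ω (xs ω) := by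
    intro xs hxs
    have heq : (fun ω => q ω (xs ω)) = fun ω => xs ω - p ω (xs ω) :=
      funext fun ω => prox_moreau (hp ω) (hφ ω) (hψ ω) (hq ω) (xs ω)
    rw [heq]
    exact hxs.sub (hpmeas xs hxs)
  -- the biconjugate prox hypothesis for the conjugate family
  have hp3 : ∀ ω, IsProxOf (fconj (fconj (fconj (f ω)))) (p ω) := by
    intro ω
    have := hp ω
    rwa [← fconj3 (f ω)] at this
  have part2 := master (fun ω => fconj (f ω)) q p rs r ψ χ hq hp3 hψ hχ hqmeas hrmeas
    hψi hχi hrs2' hr2' L hLmeas hLint hL1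
  exact part2.2
end
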